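/- arXiv:2009.12930 — 6 statements merged into one kernel-verified Lean document; each statement's English description precedes it below -/
import Mathlib

section
/- Let A ∈ ℝ_max^{n×n}. Then ρ(A) is the greatest tropical eigenvalue of A: (i) there exists x ∈ ℝ_max^n with at least one finite component such that A ⊗ x = ρ(A) ⊗ x (i.e., max_j (a_{ij} + x_j) = ρ(A) + x_i for all i); (ii) if λ ∈ ℝ ∪ {−∞} and x ∈ ℝ_max^n has at least one finite component and satisfies A ⊗ x = λ ⊗ x, then λ ≤ ρ(A). -/
/-- Max-plus identity matrix: `0` on the diagonal, `−∞` off it. -/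
noncomputable def mpId (n : ℕ) : Fin n → Fin n → EReal := fun i j => if i = j then 0 else ⊥

/-- Max-plus matrix product. -/
noncomputable def mpMul {n : ℕ} (A B : Fin n → Fin n → EReal) : Fin n → Fin n → EReal :=
  fun i j => ⨆ k, A i k + B k j

/-- Max-plus matrix powers, `A^0 = I`. -/
noncomputable def mpPow {n : ℕ} (A : Fin n → Fin n → EReal) : ℕ → Fin n → Fin n → EReal
  | 0 => mpId n
  | k + 1 => mpMul (mpPow A k) A

/-- Kleene star truncation `A* = I ⊕ A ⊕ ⋯ ⊕ A^{n−1}` (entrywise maximum). -/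
noncomputable def mpStar {n : ℕ} (A : Fin n → Fin n → EReal) : Fin n → Fin n → EReal :=
  fun i j => ⨆ k : Fin n, mpPow A (k : ℕ) i j

/-- Maximum cycle mean `ρ(A)`: the supremum, over all closed walks
`f 0, f 1, …, f k = f 0` (`k ≥ 1`), of the mean weight of the walk.  A walk using
a `−∞` arc has mean `−∞`, so this equals the maximum mean over elementary cycles
of the digraph of finite entries, and it is `−∞` when that digraph is acyclic. -/
noncomputable def rho {n : ℕ} (A : Fin n → Fin n → EReal) : EReal :=
  ⨆ (k : ℕ) (_ : 0 < k) (f : ℕ → Fin n) (_ : f k = f 0),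
    (((k : ℝ)⁻¹ : ℝ) : EReal) * ∑ i ∈ Finset.range k, A (f i) (f (i + 1))


section Aux
open Finset

noncomputable def wt {n : ℕ} (A : Fin n → Fin n → EReal) (f : ℕ → Fin n) (k : ℕ) : EReal :=
  ∑ i ∈ Finset.range k, A (f i) (f (i + 1))

lemma wt_ne_top {n : ℕ} (A : Fin n → Fin n → EReal) (hA : ∀ i j, A i j ≠ ⊤)
    (f : ℕ → Fin n) (k : ℕ) : wt A f k ≠ ⊤ := by
  induction k with
  | zero => simp [wt]
  | succ m ih => exact ne_of_lt (by rw [wt, Finset.sum_range_succ]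
                                    exact EReal.add_lt_top ih (hA _ _))

lemma ereal_add_iSup {ι : Sort*} (c : EReal) (hc : c ≠ ⊤) (g : ι → EReal) :
    c + ⨆ i, g i = ⨆ i, c + g i := by
  rcases eq_or_ne c ⊥ with rfl | hcb
  · simp only [EReal.bot_add]
    exact le_antisymm bot_le (iSup_le fun i => by simp)
  · refine le_antisymm ?_ (iSup_le fun i => add_le_add (le_refl c) (le_iSup g i))
    lift c to ℝ using ⟨hc, hcb⟩
    rw [add_comm]
    have h2 : (⨆ i, g i) ≤ (⨆ i, (c : EReal) + g i) - c :=
      iSup_le fun i => (EReal.le_sub_iff_add_le (Or.inl (EReal.coe_ne_bot c))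
        (Or.inl (EReal.coe_ne_top c))).mpr (by rw [add_comm]; exact le_iSup (fun i => (c : EReal) + g i) i)
    calc (⨆ i, g i) + (c : EReal) ≤ ((⨆ i, (c : EReal) + g i) - c) + c :=
          add_le_add h2 (le_refl _)
      _ = _ := EReal.sub_add_cancel

lemma ereal_sum_eq_bot_iff (g : ℕ → EReal) (k : ℕ) :
    ∑ i ∈ Finset.range k, g i = ⊥ ↔ ∃ i < k, g i = ⊥ := by
  induction k with
  | zero => simp
  | succ m ih =>
    rw [Finset.sum_range_succ, EReal.add_eq_bot_iff, ih]
    constructor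
    · rintro (⟨i, hi, h⟩ | h)
      · exact ⟨i, by omega, h⟩
      · exact ⟨m, by omega, h⟩
    · rintro ⟨i, hi, h⟩
      rcases eq_or_ne i m with rfl | hne
      · exact Or.inr h
      · exact Or.inl ⟨i, by omega, h⟩

lemma wt_cons {n : ℕ} (B : Fin n → Fin n → EReal) (f : ℕ → Fin n) (m : ℕ) :
    wt B f (m + 1) = wt B (fun t => f (t + 1)) m + B (f 0) (f 1) := by
  rw [wt, Finset.sum_range_succ']
  rfl

lemma pigeon {n : ℕ} (F : ℕ → Fin n) : ∃ a b, a < b ∧ b ≤ n ∧ F a = F b := by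
  have h := Finset.exists_ne_map_eq_of_card_lt_of_maps_to
    (s := Finset.range (n + 1)) (t := (Finset.univ : Finset (Fin n)))
    (by simp) (fun x _ => Finset.mem_univ (F x))
  obtain ⟨x, hx, y, hy, hxy, hF⟩ := h
  simp only [Finset.mem_range] at hx hy
  rcases lt_or_gt_of_ne hxy with h | h
  · exact ⟨x, y, h, by omega, hF⟩
  · exact ⟨y, x, h, by omega, hF.symm⟩

lemma wt_split {n : ℕ} (B : Fin n → Fin n → EReal) (f : ℕ → Fin n) {a b k : ℕ}
    (hab : a < b) (hbk : b ≤ k) (hf : f b = f a) :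
    ∃ g : ℕ → Fin n, g 0 = f 0 ∧ g (k - (b - a)) = f k ∧
      wt B f k = wt B g (k - (b - a)) + wt B (fun i => f (a + i)) (b - a) := by
  obtain ⟨Δ, hΔ, rfl⟩ : ∃ Δ, 0 < Δ ∧ b = a + Δ := ⟨b - a, by omega, by omega⟩
  obtain ⟨m, rfl⟩ : ∃ m, k = a + Δ + m := ⟨k - (a + Δ), by omega⟩
  have hkey : a + Δ + m - (a + Δ - a) = a + m := by omega
  set g : ℕ → Fin n := fun i => if i ≤ a then f i else f (i + Δ) with hgdef
  have hga : ∀ i, i ≤ a → g i = f i := fun i hi => if_pos hi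
  have hgb : ∀ i, a ≤ i → g i = f (i + Δ) := by
    intro i hi
    rcases eq_or_lt_of_le hi with rfl | h
    · show (if a ≤ a then f a else f (a + Δ)) = f (a + Δ)
      rw [if_pos le_rfl, hf]
    · exact if_neg (by omega)
  refine ⟨g, hga 0 (Nat.zero_le a), ?_, ?_⟩
  · rw [hkey]
    by_cases hm : m = 0
    · subst hm
      rw [add_zero, hga a le_rfl, add_zero, hf]
    · rw [hgb (a + m) (by omega)]
      congr 1
      omega
  · rw [hkey, show a + Δ - a = Δ from by omega]
    have e1 : wt B f (a + Δ + m)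
        = (∑ i ∈ Finset.range a, B (f i) (f (i + 1))
            + ∑ i ∈ Finset.range Δ, B (f (a + i)) (f (a + i + 1)))
          + ∑ i ∈ Finset.range m, B (f (a + Δ + i)) (f (a + Δ + i + 1)) := by
      rw [wt, Finset.sum_range_add, Finset.sum_range_add]
    have e2 : wt B g (a + m)
        = ∑ i ∈ Finset.range a, B (f i) (f (i + 1))
          + ∑ i ∈ Finset.range m, B (f (a + Δ + i)) (f (a + Δ + i + 1)) := by
      rw [wt, Finset.sum_range_add]
      congr 1
      · refine Finset.sum_congr rfl fun i hi => ?_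
        rw [Finset.mem_range] at hi
        rw [hga i (by omega), hga (i + 1) (by omega)]
      · refine Finset.sum_congr rfl fun i hi => ?_
        rw [hgb (a + i) (by omega), hgb (a + i + 1) (by omega)]
        congr 1 <;> congr 1 <;> omega
    have e3 : wt B (fun i => f (a + i)) Δ
        = ∑ i ∈ Finset.range Δ, B (f (a + i)) (f (a + i + 1)) := rfl
    rw [e1, e2, e3]
    abel


lemma mean_le_rho {n : ℕ} (A : Fin n → Fin n → EReal) {k : ℕ} (hk : 0 < k)
    (f : ℕ → Fin n) (hcl : f k = f 0) :
    (((k : ℝ)⁻¹ : ℝ) : EReal) * wt A f k ≤ rho A := by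
  rw [rho]
  exact le_iSup_of_le k (le_iSup_of_le hk (le_iSup_of_le f (le_iSup_of_le hcl le_rfl)))

noncomputable def fOf {n : ℕ} (k : Fin n) (g : Fin n → Fin n) : ℕ → Fin n :=
  fun i => g ⟨i % ((k : ℕ) + 1), lt_of_le_of_lt (Nat.le_of_lt_succ (Nat.mod_lt _ (Nat.succ_pos _))) k.isLt⟩

noncomputable def MM {n : ℕ} (A : Fin n → Fin n → EReal) : EReal :=
  ⨆ p : Fin n × (Fin n → Fin n),
    ((((((p.1 : ℕ) + 1 : ℕ)) : ℝ)⁻¹ : ℝ) : EReal) * wt A (fOf p.1 p.2) ((p.1 : ℕ) + 1)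

lemma fOf_closed {n : ℕ} (k : Fin n) (g : Fin n → Fin n) :
    fOf k g ((k : ℕ) + 1) = fOf k g 0 := by
  simp [fOf, Nat.mod_self]

lemma MM_le_rho {n : ℕ} (A : Fin n → Fin n → EReal) : MM A ≤ rho A :=
  iSup_le fun p => mean_le_rho A (Nat.succ_pos _) _ (fOf_closed p.1 p.2)

lemma mean_le_MM {n : ℕ} (A : Fin n → Fin n → EReal) (hA : ∀ i j, A i j ≠ ⊤) :
    ∀ k : ℕ, ∀ f : ℕ → Fin n, 0 < k → f k = f 0 →
      (((k : ℝ)⁻¹ : ℝ) : EReal) * wt A f k ≤ MM A := by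
  intro k
  induction k using Nat.strong_induction_on with
  | _ k IH =>
  intro f hk hcl
  by_cases hkn : k ≤ n
  · -- encode as element of the finite index type
    have hkn' : k - 1 < n := by omega
    set p : Fin n × (Fin n → Fin n) := (⟨k - 1, hkn'⟩, fun j => f (j : ℕ)) with hp
    have hlen : ((p.1 : ℕ) + 1) = k := by simp only [hp]; omega
    have hle := le_iSup (fun p : Fin n × (Fin n → Fin n) =>
      ((((((p.1 : ℕ) + 1 : ℕ)) : ℝ)⁻¹ : ℝ) : EReal) * wt A (fOf p.1 p.2) ((p.1 : ℕ) + 1)) p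
    rw [hlen] at hle
    have hwt : wt A (fOf p.1 p.2) k = wt A f k := by
      rw [wt, wt]
      refine Finset.sum_congr rfl fun i hi => ?_
      rw [Finset.mem_range] at hi
      have hf1 : ∀ t, fOf p.1 p.2 t = f (t % k) := by
        intro t
        show f ((⟨t % ((p.1 : ℕ) + 1), _⟩ : Fin n) : ℕ) = f (t % k)
        simp only [hlen]
      rw [hf1 i, hf1 (i + 1), Nat.mod_eq_of_lt hi]
      have hi1 : i + 1 ≤ k := hi
      rcases eq_or_lt_of_le hi1 with he | hlt
      · rw [he, Nat.mod_self, hcl]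
      · rw [Nat.mod_eq_of_lt hlt]
    rw [hwt] at hle
    exact hle
  · -- long walk: split off a cycle
    push_neg at hkn
    obtain ⟨a, b, hab, hbn, hfab⟩ := pigeon f
    obtain ⟨g, hg0, hgk, hsum⟩ := wt_split A f (k := k) hab (show b ≤ k by omega) hfab.symm
    set Δ := b - a with hΔdef
    have hΔpos : 0 < Δ := by omega
    have hΔlt : Δ < k := by omega
    have h2pos : 0 < k - Δ := by omega
    have h2lt : k - Δ < k := by omega
    have h1cl : (fun i => f (a + i)) Δ = (fun i => f (a + i)) 0 := by
      simp only
      rw [add_zero, show a + Δ = b from by omega, ← hfab]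
    have h1 := IH Δ hΔlt (fun i => f (a + i)) hΔpos h1cl
    have h2cl : g (k - Δ) = g 0 := by rw [hg0, hgk, hcl]
    have h2 := IH (k - Δ) h2lt g h2pos h2cl
    set W1 := wt A (fun i => f (a + i)) Δ with hW1
    set W2 := wt A g (k - Δ) with hW2
    have hkpos : (0 : ℝ) < ((k : ℝ))⁻¹ := by positivity
    rcases eq_or_ne W1 ⊥ with hb1 | hb1
    · rw [hsum, hb1, EReal.add_bot, EReal.coe_mul_bot_of_pos hkpos]
      exact bot_le
    rcases eq_or_ne W2 ⊥ with hb2 | hb2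
    · rw [hsum, hb2, EReal.bot_add, EReal.coe_mul_bot_of_pos hkpos]
      exact bot_le
    obtain ⟨w1, hw1⟩ : ∃ w : ℝ, W1 = (w : EReal) :=
      ⟨W1.toReal, (EReal.coe_toReal (wt_ne_top A hA _ _) hb1).symm⟩
    obtain ⟨w2, hw2⟩ : ∃ w : ℝ, W2 = (w : EReal) :=
      ⟨W2.toReal, (EReal.coe_toReal (wt_ne_top A hA _ _) hb2).symm⟩
    rw [hw1, ← EReal.coe_mul] at h1
    rw [hw2, ← EReal.coe_mul] at h2
    rw [hsum, hw1, hw2, ← EReal.coe_add, ← EReal.coe_mul]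
    set r1 := ((Δ : ℝ))⁻¹ * w1 with hr1
    set r2 := ((((k - Δ : ℕ)) : ℝ))⁻¹ * w2 with hr2
    have hΔR : (0 : ℝ) < (Δ : ℝ) := by exact_mod_cast hΔpos
    have hk2R : (0 : ℝ) < ((k - Δ : ℕ) : ℝ) := by exact_mod_cast h2pos
    have hkr : (k : ℝ) = (Δ : ℝ) + ((k - Δ : ℕ) : ℝ) := by
      have hh : Δ + (k - Δ) = k := by omega
      calc (k : ℝ) = ((Δ + (k - Δ) : ℕ) : ℝ) := by rw [hh]
        _ = _ := by push_cast; ring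
    have hw1' : w1 ≤ (Δ : ℝ) * max r1 r2 := by
      have e1 : w1 = (Δ : ℝ) * r1 := by rw [hr1]; field_simp
      rw [e1]
      exact mul_le_mul_of_nonneg_left (le_max_left _ _) (le_of_lt hΔR)
    have hw2' : w2 ≤ ((k - Δ : ℕ) : ℝ) * max r1 r2 := by
      have e2 : w2 = ((k - Δ : ℕ) : ℝ) * r2 := by rw [hr2]; field_simp
      rw [e2]
      exact mul_le_mul_of_nonneg_left (le_max_right _ _) (le_of_lt hk2R)
    have hfin : (k : ℝ)⁻¹ * (w2 + w1) ≤ max r1 r2 := by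
      rw [inv_mul_le_iff₀ (by positivity : (0:ℝ) < (k:ℝ)), hkr]
      calc w2 + w1 ≤ ((k - Δ : ℕ) : ℝ) * max r1 r2 + (Δ : ℝ) * max r1 r2 :=
            add_le_add hw2' hw1'
        _ = ((Δ : ℝ) + ((k - Δ : ℕ) : ℝ)) * max r1 r2 := by ring
    rcases max_cases r1 r2 with ⟨hm, _⟩ | ⟨hm, _⟩
    · rw [hm] at hfin
      exact le_trans (EReal.coe_le_coe_iff.mpr hfin) h1
    · rw [hm] at hfin
      exact le_trans (EReal.coe_le_coe_iff.mpr hfin) h2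

lemma rho_eq_MM {n : ℕ} (A : Fin n → Fin n → EReal) (hA : ∀ i j, A i j ≠ ⊤) :
    rho A = MM A := by
  refine le_antisymm ?_ (MM_le_rho A)
  rw [rho]
  exact iSup_le fun k => iSup_le fun hk => iSup_le fun f => iSup_le fun hcl =>
    mean_le_MM A hA k f hk hcl

lemma rho_attained {n : ℕ} (hn : 0 < n) (A : Fin n → Fin n → EReal)
    (hA : ∀ i j, A i j ≠ ⊤) :
    rho A = ⊥ ∨ ∃ (k : ℕ) (f : ℕ → Fin n) (w : ℝ), 0 < k ∧ k ≤ n ∧ f k = f 0 ∧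
      wt A f k = (w : EReal) ∧ rho A = (((k : ℝ)⁻¹ * w : ℝ) : EReal) := by
  have hne : Nonempty (Fin n) := ⟨⟨0, hn⟩⟩
  have heq : rho A = MM A := rho_eq_MM A hA
  obtain ⟨p, hp⟩ := exists_eq_ciSup_of_finite
    (f := fun p : Fin n × (Fin n → Fin n) =>
      ((((((p.1 : ℕ) + 1 : ℕ)) : ℝ)⁻¹ : ℝ) : EReal) * wt A (fOf p.1 p.2) ((p.1 : ℕ) + 1))
  rw [← MM] at hp
  rcases eq_or_ne (wt A (fOf p.1 p.2) ((p.1 : ℕ) + 1)) ⊥ with hbot | hwne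
  · left
    rw [heq, ← hp, hbot, EReal.coe_mul_bot_of_pos (by positivity)]
  · right
    refine ⟨(p.1 : ℕ) + 1, fOf p.1 p.2, (wt A (fOf p.1 p.2) ((p.1 : ℕ) + 1)).toReal,
      Nat.succ_pos _, by omega, fOf_closed p.1 p.2,
      (EReal.coe_toReal (wt_ne_top A hA _ _) hwne).symm, ?_⟩
    rw [heq, ← hp, ← (EReal.coe_toReal (wt_ne_top A hA _ _) hwne), ← EReal.coe_mul,
      EReal.toReal_coe]

lemma ereal_coe_sum (s : Finset ℕ) (g : ℕ → ℝ) :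
    ((∑ i ∈ s, g i : ℝ) : EReal) = ∑ i ∈ s, (g i : EReal) :=
  map_sum (⟨⟨Real.toEReal, EReal.coe_zero⟩, EReal.coe_add⟩ : ℝ →+ EReal) _ _

lemma part2 {n : ℕ} (hn : 0 < n) (A : Fin n → Fin n → EReal)
    (lam : EReal) (x : Fin n → EReal) (hlt : lam ≠ ⊤) (hxt : ∀ j, x j ≠ ⊤)
    (hxb : ∃ j, x j ≠ ⊥) (hei : ∀ i, (⨆ j, A i j + x j) = lam + x i) :
    lam ≤ rho A := by
  rcases eq_or_ne lam ⊥ with rfl | hlb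
  · exact bot_le
  lift lam to ℝ using ⟨hlt, hlb⟩ with l
  obtain ⟨j0, hj0⟩ := hxb
  have hne : Nonempty (Fin n) := ⟨j0⟩
  have step : ∀ i : Fin n, x i ≠ ⊥ → ∃ j, x j ≠ ⊥ ∧ A i j + x j = (l : EReal) + x i := by
    intro i hi
    obtain ⟨j, hj⟩ := exists_eq_ciSup_of_finite (f := fun j => A i j + x j)
    rw [hei i] at hj
    refine ⟨j, ?_, hj⟩
    intro hbot
    rw [hbot, EReal.add_bot] at hj
    rcases EReal.add_eq_bot_iff.mp hj.symm with h | h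
    · exact EReal.coe_ne_bot l h
    · exact hi h
  choose nxt hnb hstep using step
  set F : ℕ → {i : Fin n // x i ≠ ⊥} :=
    fun m => Nat.rec ⟨j0, hj0⟩ (fun _ p => ⟨nxt p.1 p.2, hnb p.1 p.2⟩) m with hFdef
  have hF : ∀ m, A (F m).1 (F (m + 1)).1 + x (F (m + 1)).1 = (l : EReal) + x (F m).1 :=
    fun m => hstep (F m).1 (F m).2
  have hxF : ∀ m, ∃ u : ℝ, x (F m).1 = (u : EReal) :=
    fun m => ⟨_, (EReal.coe_toReal (hxt _) (F m).2).symm⟩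
  choose u hu using hxF
  have harc : ∀ m, A (F m).1 (F (m + 1)).1 = ((l + u m - u (m + 1) : ℝ) : EReal) := by
    intro m
    have h := hF m
    rw [hu m, hu (m + 1)] at h
    have h2 : A (F m).1 (F (m + 1)).1 = ((l : EReal) + (u m : EReal)) - (u (m + 1) : EReal) := by
      rw [← h, EReal.add_sub_cancel_right]
    rw [h2, ← EReal.coe_add, ← EReal.coe_sub]
  obtain ⟨a, b, hab, hbn, hFab⟩ := pigeon (fun m => (F m).1)
  set k := b - a with hkdef
  have hkpos : 0 < k := by omega
  have hcl : (fun t => (F (a + t)).1) k = (fun t => (F (a + t)).1) 0 := by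
    simp only
    rw [show a + k = b from by omega, add_zero, ← hFab]
  have hmean := mean_le_rho A hkpos (fun t => (F (a + t)).1) hcl
  have hwt : wt A (fun t => (F (a + t)).1) k = (((k : ℝ) * l : ℝ) : EReal) := by
    rw [wt]
    rw [Finset.sum_congr rfl fun i (_ : i ∈ Finset.range k) =>
      show A ((F (a + i)).1) ((F (a + (i + 1))).1)
          = ((l + u (a + i) - u (a + i + 1) : ℝ) : EReal) from harc (a + i)]
    rw [← ereal_coe_sum]
    congr 1
    have tele : ∑ i ∈ Finset.range k, (u (a + i) - u (a + i + 1))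
        = u (a + 0) - u (a + k) := Finset.sum_range_sub' (fun i => u (a + i)) k
    have huab : u a = u b := by
      have : (u a : EReal) = (u b : EReal) := by
        rw [← hu a, ← hu b]
        rw [hFab]
      exact_mod_cast this
    have expand : ∀ i ∈ Finset.range k, (l + u (a + i) - u (a + i + 1))
        = l + (u (a + i) - u (a + i + 1)) := fun i _ => by ring
    rw [Finset.sum_congr rfl expand, Finset.sum_add_distrib, tele,
      Finset.sum_const, Finset.card_range, add_zero, show a + k = b from by omega,
      huab]
    push_cast
    ring
  rw [hwt, ← EReal.coe_mul] at hmean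
  have : ((k : ℝ)⁻¹ * ((k : ℝ) * l) : ℝ) = l := by
    field_simp
  rwa [this] at hmean

lemma bot_case {n : ℕ} (hn : 0 < n) (A : Fin n → Fin n → EReal)
    (hA : ∀ i j, A i j ≠ ⊤) (hrho : rho A = ⊥) :
    ∃ j0 : Fin n, ∀ i, A i j0 = ⊥ := by
  by_contra hcon
  push_neg at hcon
  choose prev hprev using hcon
  set h : ℕ → Fin n := fun m => Nat.rec ⟨0, hn⟩ (fun _ p => prev p) m with hhdef
  have hh : ∀ m, A (h (m + 1)) (h m) ≠ ⊥ := fun m => hprev (h m)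
  obtain ⟨a, b, hab, hbn, hab'⟩ := pigeon h
  set Δ := b - a with hΔ
  set f : ℕ → Fin n := fun t => h (b - t) with hfdef
  have hcl : f Δ = f 0 := by
    show h (b - Δ) = h (b - 0)
    rw [Nat.sub_zero, show b - Δ = a from by omega, hab']
  have harc : ∀ t, t < Δ → A (f t) (f (t + 1)) ≠ ⊥ := by
    intro t ht
    show A (h (b - t)) (h (b - (t + 1))) ≠ ⊥
    rw [show b - t = (b - (t + 1)) + 1 from by omega]
    exact hh _
  have hwb : wt A f Δ ≠ ⊥ := by
    rw [wt]
    intro hb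
    obtain ⟨i, hi, hbi⟩ := (ereal_sum_eq_bot_iff _ _).mp hb
    exact harc i hi hbi
  have hmean := mean_le_rho A (show 0 < Δ from by omega) f hcl
  rw [hrho] at hmean
  obtain ⟨w, hw⟩ : ∃ w : ℝ, wt A f Δ = (w : EReal) :=
    ⟨_, (EReal.coe_toReal (wt_ne_top A hA _ _) hwb).symm⟩
  rw [hw, ← EReal.coe_mul] at hmean
  exact EReal.coe_ne_bot _ (le_bot_iff.mp hmean)

lemma part1 {n : ℕ} (hn : 0 < n) (A : Fin n → Fin n → EReal)
    (hA : ∀ i j, A i j ≠ ⊤) :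
    ∃ x : Fin n → EReal, (∀ j, x j ≠ ⊤) ∧ (∃ j, x j ≠ ⊥) ∧
      ∀ i, (⨆ j, A i j + x j) = rho A + x i := by
  have hne : Nonempty (Fin n) := ⟨⟨0, hn⟩⟩
  rcases rho_attained hn A hA with hbot | ⟨k0, f0, w0, hk0, hk0n, hcl0, hw0, hrho⟩
  · obtain ⟨j0, hj0⟩ := bot_case hn A hA hbot
    refine ⟨fun i => if i = j0 then 0 else ⊥, fun j => by by_cases hj : j = j0 <;> simp [hj],
      ⟨j0, by simp⟩, ?_⟩
    intro i
    rw [hbot, EReal.bot_add]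
    refine le_antisymm (iSup_le fun j => ?_) bot_le
    by_cases hj : j = j0
    · subst hj
      simp [hj0 i]
    · simp [hj]
  · set r : ℝ := (k0 : ℝ)⁻¹ * w0 with hr
    set B : Fin n → Fin n → EReal := fun i j => A i j - (r : EReal) with hB
    have hBA : ∀ i j, A i j = (r : EReal) + B i j := by
      intro i j
      rw [add_comm]
      exact (EReal.sub_add_cancel).symm
    have hBt : ∀ i j, B i j ≠ ⊤ := by
      intro i j
      show A i j - (r : EReal) ≠ ⊤
      rw [sub_eq_add_neg, ← EReal.coe_neg]
      exact (EReal.add_lt_top (hA i j) (EReal.coe_ne_top _)).ne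
    have hwtBA : ∀ (f : ℕ → Fin n) (k : ℕ),
        wt A f k = wt B f k + (((k : ℝ) * r : ℝ) : EReal) := by
      intro f k
      calc wt A f k = ∑ i ∈ Finset.range k, (B (f i) (f (i + 1)) + (r : EReal)) :=
            Finset.sum_congr rfl fun i _ => by rw [hBA, add_comm]
        _ = wt B f k + ∑ _i ∈ Finset.range k, (r : EReal) := Finset.sum_add_distrib
        _ = wt B f k + (((k : ℝ) * r : ℝ) : EReal) := by
            rw [Finset.sum_const, Finset.card_range, ← EReal.coe_nsmul, nsmul_eq_mul]
    have hcycB : ∀ (k : ℕ) (f : ℕ → Fin n), 0 < k → f k = f 0 → wt B f k ≤ 0 := by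
      intro k f hk hc
      have hm := mean_le_rho A hk f hc
      rw [hrho] at hm
      rcases eq_or_ne (wt B f k) ⊥ with hbb | hbb
      · rw [hbb]; exact bot_le
      obtain ⟨wb, hwb⟩ : ∃ w : ℝ, wt B f k = (w : EReal) :=
        ⟨_, (EReal.coe_toReal (wt_ne_top B hBt _ _) hbb).symm⟩
      have hwA : wt A f k = ((wb + (k : ℝ) * r : ℝ) : EReal) := by
        rw [hwtBA f k, hwb, ← EReal.coe_add]
      rw [hwA, ← EReal.coe_mul] at hm
      have hmr : (k : ℝ)⁻¹ * (wb + (k : ℝ) * r) ≤ r := by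
        have := EReal.coe_le_coe_iff.mp hm
        rwa [hr] at this ⊢
      have hkR : (0 : ℝ) < (k : ℝ) := by exact_mod_cast hk
      have : wb ≤ 0 := by
        rw [inv_mul_le_iff₀ hkR] at hmr
        nlinarith
      rw [hwb, ← EReal.coe_zero]
      exact_mod_cast this
    have hcrit : wt B f0 k0 = 0 := by
      have hdec := hwtBA f0 k0
      rw [hw0] at hdec
      have hk0r : ((k0 : ℝ) * r : ℝ) = w0 := by
        rw [hr]
        have : (k0 : ℝ) ≠ 0 := by positivity
        field_simp
      rw [hk0r] at hdec
      have h2 : wt B f0 k0 = (w0 : EReal) - (w0 : ℝ) := by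
        conv_lhs => rw [← EReal.add_sub_cancel_right (a := wt B f0 k0) (b := w0), ← hdec]
      rw [h2, ← EReal.coe_sub, sub_self, EReal.coe_zero]
    set v := f0 0 with hv
    set x : Fin n → EReal := fun i =>
      ⨆ (k : Fin (n + 1)) (f : ℕ → Fin n) (_ : f 0 = i) (_ : f (k : ℕ) = v), wt B f (k : ℕ)
      with hx
    have walk_le : ∀ (i : Fin n) (k : ℕ), k ≤ n → ∀ f : ℕ → Fin n,
        f 0 = i → f k = v → wt B f k ≤ x i := by
      intro i k hkn f h0 hk
      rw [hx]
      exact le_iSup_of_le (⟨k, by omega⟩ : Fin (n + 1))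
        (le_iSup_of_le f (le_iSup_of_le h0 (le_iSup_of_le hk le_rfl)))
    obtain ⟨q, hq⟩ := exists_eq_ciSup_of_finite (f := fun p : Fin n × Fin n => B p.1 p.2)
    set S := ⨆ p : Fin n × Fin n, B p.1 p.2 with hS
    have hSt : S ≠ ⊤ := hq ▸ hBt q.1 q.2
    set C : ℝ := max S.toReal 0 with hC
    have hC0 : (0 : ℝ) ≤ C := le_max_right _ _
    have hCb : ∀ i j, B i j ≤ (C : EReal) := by
      intro i j
      calc B i j ≤ S := le_iSup (fun p : Fin n × Fin n => B p.1 p.2) (i, j)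
        _ ≤ (S.toReal : EReal) := EReal.le_coe_toReal hSt
        _ ≤ (C : EReal) := EReal.coe_le_coe_iff.mpr (le_max_left _ _)
    have hwtC : ∀ (f : ℕ → Fin n) (k : ℕ), wt B f k ≤ (((k : ℝ) * C : ℝ) : EReal) := by
      intro f k
      induction k with
      | zero => simp [wt]
      | succ m ih =>
        rw [wt, Finset.sum_range_succ, ← wt]
        calc wt B f m + B (f m) (f (m + 1)) ≤ (((m : ℝ) * C : ℝ) : EReal) + (C : EReal) :=
              add_le_add ih (hCb _ _)
          _ = ((((m : ℕ) + 1 : ℕ) : ℝ) * C : ℝ) := by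
              rw [← EReal.coe_add]
              norm_cast
              push_cast
              ring
    have hxt : ∀ i, x i ≠ ⊤ := by
      intro i
      have hb2 : x i ≤ (((n : ℝ) * C : ℝ) : EReal) := by
        rw [hx]
        refine iSup_le fun k => iSup_le fun f => iSup_le fun _ => iSup_le fun _ => ?_
        refine le_trans (hwtC f (k : ℕ)) (EReal.coe_le_coe_iff.mpr ?_)
        have hkn : ((k : ℕ) : ℝ) ≤ (n : ℝ) := by exact_mod_cast Nat.le_of_lt_succ k.isLt
        exact mul_le_mul_of_nonneg_right hkn hC0
      intro htop
      rw [htop] at hb2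
      exact EReal.coe_ne_top _ (top_le_iff.mp hb2)
    have hxv : x v = 0 := by
      refine le_antisymm ?_ ?_
      · rw [hx]
        refine iSup_le fun k => iSup_le fun f => iSup_le fun h0 => iSup_le fun hk => ?_
        rcases Nat.eq_zero_or_pos (k : ℕ) with hz | hp
        · rw [hz, wt]
          simp
        · exact hcycB _ f hp (by rw [hk, h0])
      · have h0 := walk_le v 0 (Nat.zero_le n) (fun _ => v) rfl rfl
        simpa [wt] using h0
    have hlong : ∀ (k : ℕ) (i : Fin n) (f : ℕ → Fin n),
        f 0 = i → f k = v → wt B f k ≤ x i := by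
      intro k
      induction k using Nat.strong_induction_on with
      | _ k IH =>
      intro i f h0 hkv
      by_cases hkn : k ≤ n
      · exact walk_le i k hkn f h0 hkv
      · push_neg at hkn
        obtain ⟨a, b, hab, hbn, hfab⟩ := pigeon f
        obtain ⟨g, hg0, hgk, hsum⟩ := wt_split B f (k := k) hab (by omega) hfab.symm
        have hcyc : wt B (fun t => f (a + t)) (b - a) ≤ 0 := by
          refine hcycB (b - a) _ (by omega) ?_
          show f (a + (b - a)) = f (a + 0)
          rw [show a + (b - a) = b from by omega, add_zero, ← hfab]
        calc wt B f k = wt B g (k - (b - a)) + wt B (fun t => f (a + t)) (b - a) := hsum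
          _ ≤ wt B g (k - (b - a)) + 0 := add_le_add (le_refl _) hcyc
          _ = wt B g (k - (b - a)) := add_zero _
          _ ≤ x i := IH (k - (b - a)) (by omega) i g (by rw [hg0, h0]) (by rw [hgk, hkv])
    have heig : ∀ i, (⨆ j, B i j + x j) = x i := by
      intro i
      refine le_antisymm (iSup_le fun j => ?_) ?_
      · conv_lhs => rw [hx]
        simp only
        simp only [ereal_add_iSup (B i j) (hBt i j)]
        refine iSup_le fun k => iSup_le fun f => iSup_le fun h0 => iSup_le fun hk => ?_
        set f' : ℕ → Fin n := fun t => Nat.rec i (fun t _ => f t) t with hf'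
        have hcons : wt B f' ((k : ℕ) + 1) = wt B f (k : ℕ) + B i (f 0) := wt_cons B f' (k : ℕ)
        calc B i j + wt B f (k : ℕ) = wt B f' ((k : ℕ) + 1) := by rw [hcons, h0, add_comm]
          _ ≤ x i := hlong ((k : ℕ) + 1) i f' rfl hk
      · conv_lhs => rw [hx]
        refine iSup_le fun k => iSup_le fun f => iSup_le fun h0 => iSup_le fun hkv => ?_
        rcases Nat.eq_zero_or_pos (k : ℕ) with hz | hp
        · rw [hz] at hkv
          rw [hz]
          have hiv : i = v := by rw [← h0, hkv]
          have h00 : wt B f 0 = 0 := by rw [wt]; simp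
          rw [h00]
          obtain ⟨m0, hm0⟩ : ∃ m, k0 = m + 1 := ⟨k0 - 1, by omega⟩
          have hdec : wt B f0 k0 = wt B (fun t => f0 (t + 1)) m0 + B (f0 0) (f0 1) := by
            rw [hm0]
            exact wt_cons B f0 m0
          have htail : wt B (fun t => f0 (t + 1)) m0 ≤ x (f0 1) := by
            refine walk_le (f0 1) m0 (by omega) _ rfl ?_
            show f0 (m0 + 1) = v
            rw [← hm0, hcl0]
          calc (0 : EReal) = wt B f0 k0 := hcrit.symm
            _ = B (f0 0) (f0 1) + wt B (fun t => f0 (t + 1)) m0 := by rw [hdec, add_comm]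
            _ ≤ B (f0 0) (f0 1) + x (f0 1) := add_le_add (le_refl _) htail
            _ ≤ ⨆ j, B i j + x j := by
                rw [hiv, hv]
                exact le_iSup (fun j => B (f0 0) j + x j) (f0 1)
        · obtain ⟨m, hm⟩ : ∃ m, (k : ℕ) = m + 1 := ⟨(k : ℕ) - 1, by omega⟩
          have hdec : wt B f (k : ℕ) = wt B (fun t => f (t + 1)) m + B (f 0) (f 1) := by
            rw [hm]
            exact wt_cons B f m
          have htail : wt B (fun t => f (t + 1)) m ≤ x (f 1) := by
            refine walk_le (f 1) m (by have := k.isLt; omega) _ rfl ?_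
            show f (m + 1) = v
            rw [← hm, hkv]
          calc wt B f (k : ℕ) = B (f 0) (f 1) + wt B (fun t => f (t + 1)) m := by
                rw [hdec, add_comm]
            _ ≤ B (f 0) (f 1) + x (f 1) := add_le_add (le_refl _) htail
            _ ≤ ⨆ j, B i j + x j := by
                rw [h0]
                exact le_iSup (fun j => B i j + x j) (f 1)
    refine ⟨x, hxt, ⟨v, by rw [hxv]; simp⟩, ?_⟩
    intro i
    calc (⨆ j, A i j + x j) = ⨆ j, (r : EReal) + (B i j + x j) :=
          iSup_congr fun j => by rw [hBA i j, add_assoc]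
      _ = (r : EReal) + ⨆ j, (B i j + x j) := (ereal_add_iSup _ (EReal.coe_ne_top r) _).symm
      _ = (r : EReal) + x i := by rw [heig i]
      _ = rho A + x i := by rw [hrho]

end Aux

/-- `ρ(A)` is the greatest tropical eigenvalue of `A ∈ ℝ_max^{n×n}` (`n ≥ 1`):
(i) there is an eigenvector `x ∈ ℝ_max^n` with at least one finite component for
the eigenvalue `ρ(A)`; (ii) every eigenvalue `λ ∈ ℝ ∪ {−∞}` admitting such an
eigenvector satisfies `λ ≤ ρ(A)`. -/
theorem stmt5 (n : ℕ) (hn : 0 < n) (A : Fin n → Fin n → EReal)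
    (hA : ∀ i j, A i j ≠ ⊤) :
    (∃ x : Fin n → EReal, (∀ j, x j ≠ ⊤) ∧ (∃ j, x j ≠ ⊥) ∧
        ∀ i, (⨆ j, A i j + x j) = rho A + x i) ∧
    (∀ (lam : EReal) (x : Fin n → EReal), lam ≠ ⊤ → (∀ j, x j ≠ ⊤) →
        (∃ j, x j ≠ ⊥) → (∀ i, (⨆ j, A i j + x j) = lam + x i) → lam ≤ rho A) := by
  exact ⟨part1 hn A hA, fun lam x hlt hxt hxb hei => part2 hn A lam x hlt hxt hxb hei⟩
end

section
/- Let C ∈ ℝ_max^{n×n}. Then the infimum over x ∈ ℝ^n of max_{(i,j) : c_{ij} ∈ ℝ} (c_{ij} + x_j − x_i) equals ρ(C), where both sides are elements of ℝ ∪ {−∞} and the maximum over an empty set is −∞. -/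
private lemma ereal_sum_coe (k : ℕ) (g : ℕ → ℝ) :
    (∑ t ∈ Finset.range k, ((g t : ℝ) : EReal)) = ((∑ t ∈ Finset.range k, g t : ℝ) : EReal) := by
  induction k with
  | zero => simp
  | succ k ih => rw [Finset.sum_range_succ, Finset.sum_range_succ, ih, EReal.coe_add]

private lemma ereal_sum_bot {k : ℕ} {F : ℕ → EReal} {t : ℕ} (ht : t ∈ Finset.range k)
    (h : F t = ⊥) : ∑ s ∈ Finset.range k, F s = ⊥ := by
  rw [← Finset.sum_erase_add _ _ ht, h, EReal.add_bot]

private lemma superharmonic (n : ℕ) (B : Fin n → Fin n → EReal) (hB : ∀ i j, B i j ≠ ⊤)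
    (hP : ∀ k, 0 < k → ∀ f : ℕ → Fin n, f k = f 0 →
      ∑ t ∈ Finset.range k, B (f t) (f (t + 1)) ≤ 0) :
    ∃ x : Fin n → ℝ, ∀ i j, B i j + (x j : EReal) ≤ (x i : EReal) := by
  classical
  set X : Fin n → EReal := fun i =>
    ⨆ (k : Fin n) (f : ℕ → Fin n) (_ : f 0 = i),
      ∑ t ∈ Finset.range (k : ℕ), B (f t) (f (t + 1)) with hXdef
  set R : ℝ := ∑ i : Fin n, ∑ j : Fin n, |(B i j).toReal| with hRdef
  have hBR : ∀ i j, B i j ≤ (R : EReal) := by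
    intro i j
    refine (EReal.le_coe_toReal (hB i j)).trans ?_
    rw [EReal.coe_le_coe_iff]
    calc (B i j).toReal ≤ |(B i j).toReal| := le_abs_self _
      _ ≤ ∑ j' : Fin n, |(B i j').toReal| :=
          Finset.single_le_sum (f := fun j' => |(B i j').toReal|)
            (fun _ _ => abs_nonneg _) (Finset.mem_univ j)
      _ ≤ R := Finset.single_le_sum
          (f := fun i' => ∑ j' : Fin n, |(B i' j').toReal|)
          (fun _ _ => Finset.sum_nonneg fun _ _ => abs_nonneg _) (Finset.mem_univ i)
  have hwalk : ∀ (m : ℕ), m ≤ n → ∀ g : ℕ → Fin n,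
      ∑ t ∈ Finset.range m, B (g t) (g (t + 1)) ≤ ((n * max R 0 : ℝ) : EReal) := by
    intro m hm g
    calc ∑ t ∈ Finset.range m, B (g t) (g (t + 1))
        ≤ ∑ _t ∈ Finset.range m, ((R : ℝ) : EReal) := Finset.sum_le_sum fun t _ => hBR _ _
      _ = ((∑ _t ∈ Finset.range m, R : ℝ) : EReal) := ereal_sum_coe m _
      _ ≤ ((n * max R 0 : ℝ) : EReal) := by
          rw [Finset.sum_const, Finset.card_range, nsmul_eq_mul, EReal.coe_le_coe_iff]
          calc (m : ℝ) * R ≤ m * max R 0 :=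
                mul_le_mul_of_nonneg_left (le_max_left _ _) (by positivity)
            _ ≤ n * max R 0 := by
                apply mul_le_mul_of_nonneg_right _ (le_max_right _ _)
                exact_mod_cast hm
  have hXle : ∀ i, X i ≤ ((n * max R 0 : ℝ) : EReal) := fun i =>
    iSup_le fun k => iSup_le fun f => iSup_le fun _ => hwalk _ k.isLt.le f
  have hX0 : ∀ i, (0 : EReal) ≤ X i := fun i =>
    le_iSup_of_le ⟨0, i.pos⟩ (le_iSup_of_le (fun _ => i) (le_iSup_of_le rfl (by simp)))
  have hXtop : ∀ i, X i ≠ ⊤ := fun i =>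
    ne_top_of_le_ne_top (EReal.coe_ne_top _) (hXle i)
  have hXbot : ∀ i, X i ≠ ⊥ := fun i h => by
    have := hX0 i; rw [h] at this; simp at this
  -- key claim : any walk from i of length ≤ n has weight ≤ X i
  have claim : ∀ i : Fin n, ∀ m, m ≤ n → ∀ g : ℕ → Fin n, g 0 = i →
      ∑ t ∈ Finset.range m, B (g t) (g (t + 1)) ≤ X i := by
    intro i m hm g hg
    rcases lt_or_eq_of_le hm with hlt | heq
    · exact le_iSup_of_le ⟨m, hlt⟩ (le_iSup_of_le g (le_iSup_of_le hg le_rfl))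
    · -- m = n : pigeonhole, cut out a cycle
      obtain ⟨a, b, hab, hgab, hbm⟩ : ∃ a b, a < b ∧ g a = g b ∧ b ≤ m := by
        obtain ⟨a, ha, b, hb, hne, heq'⟩ :=
          Finset.exists_ne_map_eq_of_card_lt_of_maps_to
            (s := Finset.range (m + 1)) (t := (Finset.univ : Finset (Fin n)))
            (by simp [heq.symm]) (fun a _ => Finset.mem_univ (g a))
        rw [Finset.mem_range] at ha hb
        rcases lt_or_gt_of_ne hne with h | h
        · exact ⟨a, b, h, heq', by omega⟩
        · exact ⟨b, a, h, heq'.symm, by omega⟩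
      set d : ℕ := b - a with hd
      have hdpos : 0 < d := by omega
      have hadb : a + d = b := by omega
      have hcyc : ∑ t ∈ Finset.range d, B (g (a + t)) (g (a + t + 1)) ≤ 0 := by
        have := hP d hdpos (fun t => g (a + t)) (by show g (a + d) = g (a + 0); rw [hadb, add_zero]; exact hgab.symm)
        simpa [add_assoc] using this
      set m' : ℕ := m - d with hm'
      have ham' : a ≤ m' := by omega
      have hm'lt : m' < n := by omega
      set g' : ℕ → Fin n := fun t => if t < a then g t else g (t + d) with hg'
      have hg'0 : g' 0 = i := by
        by_cases h0 : 0 < a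
        · have h1 : g' 0 = g 0 := if_pos h0
          rw [h1]; exact hg
        · have ha0 : a = 0 := by omega
          have h1 : g' 0 = g (0 + d) := if_neg (by omega)
          rw [h1]
          have h2 : 0 + d = b := by omega
          rw [h2, ← hgab, ha0, hg]
      have hW1 : ∀ t ∈ Finset.Ico 0 a, B (g' t) (g' (t + 1)) = B (g t) (g (t + 1)) := by
        intro t ht
        rw [Finset.mem_Ico] at ht
        have h't : g' t = g t := if_pos ht.2
        have h't1 : g' (t + 1) = g (t + 1) := by
          by_cases h : t + 1 < a
          · exact if_pos h
          · have hta1 : t + 1 = a := by omega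
            have e : g' (t + 1) = g (t + 1 + d) := if_neg h
            rw [e]
            have e2 : t + 1 + d = b := by omega
            rw [e2, ← hgab, hta1]
        rw [h't, h't1]
      have hsum' : ∑ t ∈ Finset.range m', B (g' t) (g' (t + 1))
          = (∑ t ∈ Finset.Ico 0 a, B (g t) (g (t + 1)))
            + ∑ t ∈ Finset.Ico b m, B (g t) (g (t + 1)) := by
        rw [Finset.range_eq_Ico, ← Finset.sum_Ico_consecutive _ (Nat.zero_le a) ham',
          Finset.sum_congr rfl hW1]
        congr 1
        rw [Finset.sum_Ico_eq_sum_range, Finset.sum_Ico_eq_sum_range]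
        have hcard : m' - a = m - b := by omega
        rw [hcard]
        refine Finset.sum_congr rfl fun t _ => ?_
        have e1 : g' (a + t) = g (a + t + d) := if_neg (by omega)
        have e2 : g' (a + t + 1) = g (a + t + 1 + d) := if_neg (by omega)
        rw [e1, e2]
        have i1 : a + t + d = b + t := by omega
        have i2 : a + t + 1 + d = b + t + 1 := by omega
        rw [i1, i2]
      have hcyc' : ∑ t ∈ Finset.Ico a b, B (g t) (g (t + 1)) ≤ 0 := by
        rw [Finset.sum_Ico_eq_sum_range]
        exact hcyc
      calc ∑ t ∈ Finset.range m, B (g t) (g (t + 1))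
          = (∑ t ∈ Finset.Ico 0 a, B (g t) (g (t + 1)))
            + ((∑ t ∈ Finset.Ico a b, B (g t) (g (t + 1)))
              + ∑ t ∈ Finset.Ico b m, B (g t) (g (t + 1))) := by
            rw [Finset.sum_Ico_consecutive _ (by omega : a ≤ b) (by omega : b ≤ m),
              Finset.sum_Ico_consecutive _ (Nat.zero_le a) (by omega : a ≤ m),
              Finset.range_eq_Ico]
        _ ≤ (∑ t ∈ Finset.Ico 0 a, B (g t) (g (t + 1)))
            + ((0 : EReal) + ∑ t ∈ Finset.Ico b m, B (g t) (g (t + 1))) :=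
            add_le_add_right (add_le_add_left hcyc' _) _
        _ = ∑ t ∈ Finset.range m', B (g' t) (g' (t + 1)) := by rw [zero_add, hsum']
        _ ≤ X i := le_iSup_of_le ⟨m', hm'lt⟩ (le_iSup_of_le g' (le_iSup_of_le hg'0 le_rfl))
  refine ⟨fun i => (X i).toReal, fun i j => ?_⟩
  rw [EReal.coe_toReal (hXtop j) (hXbot j), EReal.coe_toReal (hXtop i) (hXbot i)]
  rcases eq_or_ne (B i j) ⊥ with hb | hb
  · simp [hb]
  · have hbc : ((B i j).toReal : EReal) = B i j := EReal.coe_toReal (hB i j) hb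
    set c : ℝ := (B i j).toReal with hcdef
    rw [← hbc, add_comm,
      ← EReal.le_sub_iff_add_le (Or.inl (EReal.coe_ne_bot c)) (Or.inl (EReal.coe_ne_top c))]
    refine iSup_le fun k => iSup_le fun f => iSup_le fun hf => ?_
    rw [EReal.le_sub_iff_add_le (Or.inl (EReal.coe_ne_bot c)) (Or.inl (EReal.coe_ne_top c)),
      add_comm]
    set g : ℕ → Fin n := fun t => if t = 0 then i else f (t - 1) with hgdef
    have hsum : ∑ t ∈ Finset.range ((k : ℕ) + 1), B (g t) (g (t + 1))
        = (c : EReal) + ∑ t ∈ Finset.range (k : ℕ), B (f t) (f (t + 1)) := by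
      rw [Finset.sum_range_succ']
      have h0 : B (g 0) (g 1) = (c : EReal) := by
        have e1 : g 0 = i := rfl
        have e2 : g 1 = f 0 := rfl
        rw [e1, e2, hf]; exact hbc.symm
      have hcong : ∑ t ∈ Finset.range (k : ℕ), B (g (t + 1)) (g (t + 1 + 1))
          = ∑ t ∈ Finset.range (k : ℕ), B (f t) (f (t + 1)) :=
        Finset.sum_congr rfl fun t _ => rfl
      rw [h0, hcong, add_comm]
    calc (c : EReal) + ∑ t ∈ Finset.range (k : ℕ), B (f t) (f (t + 1))
        = ∑ t ∈ Finset.range ((k : ℕ) + 1), B (g t) (g (t + 1)) := hsum.symm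
      _ ≤ X i := claim i ((k : ℕ) + 1) (by have := k.isLt; omega) g (if_pos rfl)

/-- `inf_{x ∈ ℝ^n} max_{(i,j) : C i j ∈ ℝ} (C i j + x j − x i) = ρ(C)`,
where the maximum over an empty set is `−∞`. -/
theorem stmt6 (n : ℕ) (C : Fin n → Fin n → EReal) (hC : ∀ i j, C i j ≠ ⊤) :
    (⨅ x : Fin n → ℝ,
        ⨆ (i) (j) (_ : C i j ≠ ⊥), (C i j + (x j : EReal) - (x i : EReal))) = rho C := by
  apply le_antisymm
  · -- inf ≤ rho : via superharmonic vectors for every M > rho C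
    rw [← EReal.le_of_forall_lt_iff_le]
    intro M hM
    set B : Fin n → Fin n → EReal := fun i j => C i j - (M : EReal) with hBdef
    have hBtop : ∀ i j, B i j ≠ ⊤ := by
      intro i j
      rcases eq_or_ne (C i j) ⊥ with h | h
      · have hb : B i j = ⊥ := by
          show C i j - (M : EReal) = ⊥
          rw [h, EReal.bot_sub]
        rw [hb]; exact bot_ne_top
      · have hc := EReal.coe_toReal (hC i j) h
        show C i j - (M : EReal) ≠ ⊤
        rw [← hc, ← EReal.coe_sub]
        exact EReal.coe_ne_top _
    have hP : ∀ k, 0 < k → ∀ f : ℕ → Fin n, f k = f 0 →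
        ∑ t ∈ Finset.range k, B (f t) (f (t + 1)) ≤ 0 := by
      intro k hk f hf
      by_cases hbot : ∃ t ∈ Finset.range k, C (f t) (f (t + 1)) = ⊥
      · obtain ⟨t, ht, h⟩ := hbot
        have hB' : B (f t) (f (t + 1)) = ⊥ := by
          show C (f t) (f (t + 1)) - (M : EReal) = ⊥
          rw [h, EReal.bot_sub]
        rw [ereal_sum_bot ht hB']
        exact bot_le
      · push_neg at hbot
        have hco : ∀ t ∈ Finset.range k, B (f t) (f (t + 1))
            = (((C (f t) (f (t + 1))).toReal - M : ℝ) : EReal) := by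
          intro t ht
          show C (f t) (f (t + 1)) - (M : EReal) = _
          rw [EReal.coe_sub, EReal.coe_toReal (hC _ _) (hbot t ht)]
        rw [Finset.sum_congr rfl hco, ereal_sum_coe, ← EReal.coe_zero, EReal.coe_le_coe_iff]
        have hrho : (((k : ℝ)⁻¹ : ℝ) : EReal) * ∑ t ∈ Finset.range k, C (f t) (f (t + 1))
            ≤ rho C :=
          le_iSup_of_le k (le_iSup_of_le hk (le_iSup_of_le f (le_iSup_of_le hf le_rfl)))
        have hsumC : ∑ t ∈ Finset.range k, C (f t) (f (t + 1))
            = ((∑ t ∈ Finset.range k, (C (f t) (f (t + 1))).toReal : ℝ) : EReal) := by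
          rw [← ereal_sum_coe]
          exact Finset.sum_congr rfl fun t ht => (EReal.coe_toReal (hC _ _) (hbot t ht)).symm
        rw [hsumC, ← EReal.coe_mul] at hrho
        have hlt : (k : ℝ)⁻¹ * (∑ t ∈ Finset.range k, (C (f t) (f (t + 1))).toReal) < M := by
          have h2 := lt_of_le_of_lt hrho hM
          exact EReal.coe_lt_coe_iff.mp h2
        have hkpos : (0 : ℝ) < (k : ℝ) := by exact_mod_cast hk
        have h3 : (k : ℝ) * ((k : ℝ)⁻¹ * ∑ t ∈ Finset.range k, (C (f t) (f (t + 1))).toReal)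
            < (k : ℝ) * M := mul_lt_mul_of_pos_left hlt hkpos
        rw [← mul_assoc, mul_inv_cancel₀ hkpos.ne', one_mul] at h3
        rw [Finset.sum_sub_distrib, Finset.sum_const, Finset.card_range, nsmul_eq_mul]
        linarith
    obtain ⟨x, hx⟩ := superharmonic n B hBtop hP
    refine iInf_le_of_le x (iSup_le fun i => iSup_le fun j => iSup_le fun hij => ?_)
    have h1 := hx i j
    have hc : ((C i j).toReal : EReal) = C i j := EReal.coe_toReal (hC i j) hij
    set c : ℝ := (C i j).toReal with hcdef
    have h1' : (((c - M) + x j : ℝ) : EReal) ≤ ((x i : ℝ) : EReal) := by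
      rw [EReal.coe_add, EReal.coe_sub, hc]
      exact h1
    have h1'' : (c - M) + x j ≤ x i := EReal.coe_le_coe_iff.mp h1'
    rw [← hc, ← EReal.coe_add, ← EReal.coe_sub, EReal.coe_le_coe_iff]
    linarith
  · -- rho ≤ inf
    refine le_iInf fun x => ?_
    refine iSup_le fun k => iSup_le fun hk => iSup_le fun f => iSup_le fun hf => ?_
    set S := ⨆ (i) (j) (_ : C i j ≠ ⊥), (C i j + (x j : EReal) - (x i : EReal)) with hSdef
    by_cases hbot : ∃ t ∈ Finset.range k, C (f t) (f (t + 1)) = ⊥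
    · obtain ⟨t, ht, h⟩ := hbot
      rw [ereal_sum_bot ht h, EReal.mul_bot_of_pos]
      · exact bot_le
      · exact EReal.coe_pos.mpr (inv_pos.mpr (by exact_mod_cast hk))
    · push_neg at hbot
      by_cases hStop : S = ⊤
      · rw [hStop]; exact le_top
      have hterm : ∀ t ∈ Finset.range k,
          (((C (f t) (f (t + 1))).toReal + x (f (t + 1)) - x (f t) : ℝ) : EReal) ≤ S := by
        intro t ht
        calc (((C (f t) (f (t + 1))).toReal + x (f (t + 1)) - x (f t) : ℝ) : EReal)
            = C (f t) (f (t + 1)) + (x (f (t + 1)) : EReal) - (x (f t) : EReal) := by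
              rw [EReal.coe_sub, EReal.coe_add, EReal.coe_toReal (hC _ _) (hbot t ht)]
          _ ≤ S := le_iSup_of_le (f t) (le_iSup_of_le (f (t + 1))
              (le_iSup_of_le (hbot t ht) le_rfl))
      have hSbot : S ≠ ⊥ := by
        intro h
        have h0 := hterm 0 (Finset.mem_range.mpr hk)
        rw [h, le_bot_iff] at h0
        exact EReal.coe_ne_bot _ h0
      set s : ℝ := S.toReal with hsdef
      have hSs : S = (s : EReal) := (EReal.coe_toReal hStop hSbot).symm
      have hreal : ∀ t ∈ Finset.range k,
          (C (f t) (f (t + 1))).toReal ≤ s + x (f t) - x (f (t + 1)) := by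
        intro t ht
        have h2 := hterm t ht
        rw [hSs, EReal.coe_le_coe_iff] at h2
        linarith
      have hsumC : ∑ t ∈ Finset.range k, C (f t) (f (t + 1))
          = ((∑ t ∈ Finset.range k, (C (f t) (f (t + 1))).toReal : ℝ) : EReal) := by
        rw [← ereal_sum_coe]
        exact Finset.sum_congr rfl fun t ht => (EReal.coe_toReal (hC _ _) (hbot t ht)).symm
      rw [hsumC, ← EReal.coe_mul, hSs, EReal.coe_le_coe_iff]
      set T := ∑ t ∈ Finset.range k, (C (f t) (f (t + 1))).toReal with hTdef
      have hTk : T ≤ k * s := by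
        have h1 : T ≤ ∑ t ∈ Finset.range k, (s + (x (f t) - x (f (t + 1)))) := by
          refine Finset.sum_le_sum fun t ht => ?_
          have := hreal t ht; linarith
        have h2 : ∑ t ∈ Finset.range k, (s + (x (f t) - x (f (t + 1))))
            = k * s + (x (f 0) - x (f k)) := by
          rw [Finset.sum_add_distrib, Finset.sum_const, Finset.card_range, nsmul_eq_mul,
            Finset.sum_range_sub' (fun t => x (f t))]
        rw [hf, sub_self, add_zero] at h2
        linarith
      have hkpos : (0 : ℝ) < (k : ℝ) := by exact_mod_cast hk
      calc (k : ℝ)⁻¹ * T ≤ (k : ℝ)⁻¹ * (k * s) :=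
            mul_le_mul_of_nonneg_left hTk (by positivity)
        _ = s := by field_simp
end

section
/- Let p ∈ ℝ_max^n and q ∈ (ℝ ∪ {+∞})^n. Then the infimum over x ∈ ℝ^n of max( max_{i : p_i ∈ ℝ} (p_i − x_i), max_{i : q_i ∈ ℝ} (x_i − q_i) ) equals (1/2) · max_{i : p_i ∈ ℝ and q_i ∈ ℝ} (p_i − q_i), where both sides are elements of ℝ ∪ {−∞} and the maximum over an empty set is −∞. (In max-plus notation: inf_{x ∈ ℝ^n} (x^- ⊗ p ⊕ q^- ⊗ x) = (q^- ⊗ p)^{⊗ 1/2}.) -/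
/-- Unconstrained tropical pseudolinear optimization:
`inf_{x ∈ ℝ^n} max( max_{i : p i ∈ ℝ}(p i − x i), max_{i : q i ∈ ℝ}(x i − q i) )
  = (1/2) · max_{i : p i, q i ∈ ℝ}(p i − q i)`,
where `p ∈ ℝ_max^n` (`p i ≠ ⊤`), `q ∈ (ℝ ∪ {+∞})^n` (`q i ≠ ⊥`), empty maxima
are `−∞`, and `(1/2)·(−∞) = −∞` in `EReal`. -/
theorem stmt7 (n : ℕ) (p q : Fin n → EReal)
    (hp : ∀ i, p i ≠ ⊤) (hq : ∀ i, q i ≠ ⊥) :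
    (⨅ x : Fin n → ℝ,
        (⨆ (i) (_ : p i ≠ ⊥), (p i - (x i : EReal))) ⊔
        (⨆ (i) (_ : q i ≠ ⊤), ((x i : EReal) - q i))) =
      (((2 : ℝ)⁻¹ : ℝ) : EReal) * ⨆ (i) (_ : p i ≠ ⊥) (_ : q i ≠ ⊤), (p i - q i) := by
  classical
  set c : EReal := (((2 : ℝ)⁻¹ : ℝ) : EReal) with hc
  set S : EReal := ⨆ (i) (_ : p i ≠ ⊥) (_ : q i ≠ ⊤), (p i - q i) with hS
  have hc0 : (0 : EReal) ≤ c := by rw [hc]; norm_num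
  apply le_antisymm
  · -- upper bound
    have key : ∀ t : ℝ,
        (⨅ x : Fin n → ℝ,
          (⨆ (i) (_ : p i ≠ ⊥), (p i - (x i : EReal))) ⊔
          (⨆ (i) (_ : q i ≠ ⊤), ((x i : EReal) - q i)))
          ≤ c * S ⊔ ((-t : ℝ) : EReal) := by
      intro t
      set x : Fin n → ℝ := fun i =>
        if p i ≠ ⊥ ∧ q i ≠ ⊤ then ((p i).toReal + (q i).toReal) / 2
        else if p i ≠ ⊥ then (p i).toReal + t else (q i).toReal - t with hx
      refine iInf_le_of_le x (sup_le ?_ ?_)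
      · refine iSup_le fun i => iSup_le fun hpi => ?_
        set a := (p i).toReal with ha
        have hpa : p i = (a : EReal) := (EReal.coe_toReal (hp i) hpi).symm
        by_cases hqi : q i ≠ ⊤
        · set b := (q i).toReal with hb
          have hqb : q i = (b : EReal) := (EReal.coe_toReal hqi (hq i)).symm
          have hxi : x i = (a + b) / 2 := by simp [hx, hpi, hqi, ha, hb]
          have h1 : p i - (x i : EReal) = (((a - b) / 2 : ℝ) : EReal) := by
            rw [hpa, hxi, ← EReal.coe_sub]
            congr 1
            ring
          have h2 : p i - q i ≤ S := by
            rw [hS]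
            exact le_iSup_of_le i (le_iSup_of_le hpi (le_iSup_of_le hqi le_rfl))
          have h3 : c * (p i - q i) ≤ c * S := mul_le_mul_of_nonneg_left h2 hc0
          have h4 : c * (p i - q i) = (((a - b) / 2 : ℝ) : EReal) := by
            rw [hpa, hqb, ← EReal.coe_sub, hc, ← EReal.coe_mul]
            congr 1
            ring
          rw [h1, ← h4]
          exact le_sup_of_le_left h3
        · push_neg at hqi
          have hxi : x i = a + t := by simp [hx, hpi, hqi, ha]
          have h1 : p i - (x i : EReal) = ((-t : ℝ) : EReal) := by
            rw [hpa, hxi, ← EReal.coe_sub]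
            congr 1
            ring
          rw [h1]
          exact le_sup_right
      · refine iSup_le fun i => iSup_le fun hqi => ?_
        set b := (q i).toReal with hb
        have hqb : q i = (b : EReal) := (EReal.coe_toReal hqi (hq i)).symm
        by_cases hpi : p i ≠ ⊥
        · set a := (p i).toReal with ha
          have hpa : p i = (a : EReal) := (EReal.coe_toReal (hp i) hpi).symm
          have hxi : x i = (a + b) / 2 := by simp [hx, hpi, hqi, ha, hb]
          have h1 : (x i : EReal) - q i = (((a - b) / 2 : ℝ) : EReal) := by
            rw [hqb, hxi, ← EReal.coe_sub]
            congr 1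
            ring
          have h2 : p i - q i ≤ S := by
            rw [hS]
            exact le_iSup_of_le i (le_iSup_of_le hpi (le_iSup_of_le hqi le_rfl))
          have h3 : c * (p i - q i) ≤ c * S := mul_le_mul_of_nonneg_left h2 hc0
          have h4 : c * (p i - q i) = (((a - b) / 2 : ℝ) : EReal) := by
            rw [hpa, hqb, ← EReal.coe_sub, hc, ← EReal.coe_mul]
            congr 1
            ring
          rw [h1, ← h4]
          exact le_sup_of_le_left h3
        · push_neg at hpi
          have hxi : x i = b - t := by simp [hx, hpi, hb]
          have h1 : (x i : EReal) - q i = ((-t : ℝ) : EReal) := by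
            rw [hqb, hxi, ← EReal.coe_sub]
            congr 1
            ring
          rw [h1]
          exact le_sup_right
    have hbot : (⨅ t : ℝ, ((-t : ℝ) : EReal)) = ⊥ := by
      rw [iInf_eq_bot]
      intro b hb
      obtain ⟨y, _, hy2⟩ := EReal.exists_between_coe_real hb
      exact ⟨-y, by simpa using hy2⟩
    calc (⨅ x : Fin n → ℝ,
          (⨆ (i) (_ : p i ≠ ⊥), (p i - (x i : EReal))) ⊔
          (⨆ (i) (_ : q i ≠ ⊤), ((x i : EReal) - q i)))
        ≤ ⨅ t : ℝ, (c * S ⊔ ((-t : ℝ) : EReal)) := le_iInf key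
      _ = c * S ⊔ ⨅ t : ℝ, ((-t : ℝ) : EReal) := (sup_iInf_eq _ _).symm
      _ = c * S := by rw [hbot, sup_bot_eq]
  · -- lower bound
    refine le_iInf fun x => ?_
    set V : EReal := (⨆ (i) (_ : p i ≠ ⊥), (p i - (x i : EReal))) ⊔
        (⨆ (i) (_ : q i ≠ ⊤), ((x i : EReal) - q i)) with hV
    have hS2 : S ≤ ((2 : ℝ) : EReal) * V := by
      rw [hS]
      refine iSup_le fun i => iSup_le fun hpi => iSup_le fun hqi => ?_
      set a := (p i).toReal with ha
      set b := (q i).toReal with hb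
      have hpa : p i = (a : EReal) := (EReal.coe_toReal (hp i) hpi).symm
      have hqb : q i = (b : EReal) := (EReal.coe_toReal hqi (hq i)).symm
      set m : ℝ := max (a - x i) (x i - b) with hm
      have hmV : ((m : ℝ) : EReal) ≤ V := by
        rcases max_cases (a - x i) (x i - b) with ⟨hm1, _⟩ | ⟨hm1, _⟩
        · rw [hm, hm1]
          refine le_sup_of_le_left ?_
          refine le_iSup_of_le i (le_iSup_of_le hpi ?_)
          rw [hpa, ← EReal.coe_sub]
        · rw [hm, hm1]
          refine le_sup_of_le_right ?_
          refine le_iSup_of_le i (le_iSup_of_le hqi ?_)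
          rw [hqb, ← EReal.coe_sub]
      have h2m : a - b ≤ 2 * m := by
        have h1 := le_max_left (a - x i) (x i - b)
        have h2 := le_max_right (a - x i) (x i - b)
        rw [← hm] at h1 h2
        linarith
      calc p i - q i = (((a - b) : ℝ) : EReal) := by rw [hpa, hqb, ← EReal.coe_sub]
        _ ≤ (((2 * m) : ℝ) : EReal) := EReal.coe_le_coe_iff.2 h2m
        _ = ((2 : ℝ) : EReal) * ((m : ℝ) : EReal) := by rw [EReal.coe_mul]
        _ ≤ ((2 : ℝ) : EReal) * V := mul_le_mul_of_nonneg_left hmV (by norm_num)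
    calc c * S ≤ c * (((2 : ℝ) : EReal) * V) := mul_le_mul_of_nonneg_left hS2 hc0
      _ = (c * ((2 : ℝ) : EReal)) * V := (mul_assoc _ _ _).symm
      _ = 1 * V := by rw [hc, ← EReal.coe_mul]; norm_num
      _ = V := one_mul V
end

section
/- Let U ∈ ℝ_max^{n×n} with ρ(U) ≤ 0, let U* = I ⊕ U ⊕ ⋯ ⊕ U^{n−1} with entries u*_{ij}, let g ∈ ℝ_max^n, h ∈ (ℝ ∪ {+∞})^n with U* ⊗ g ≤ h, and let p ∈ ℝ_max^n, q ∈ (ℝ ∪ {+∞})^n. Then the infimum over x ∈ ℝ^n satisfying g ≤ x ≤ h and U ⊗ x ≤ x of the objective f(x) = max( max_{i : p_i ∈ ℝ} (p_i − x_i), max_{i : q_i ∈ ℝ} (x_i − q_i) ) equals θ := max( (1/2)·max_{i,j : q_i ∈ ℝ, u*_{ij} ∈ ℝ, p_j ∈ ℝ} (−q_i + u*_{ij} + p_j), max_{i,j : h_i ∈ ℝ, u*_{ij} ∈ ℝ, p_j ∈ ℝ} (−h_i + u*_{ij} + p_j), max_{i,j : q_i ∈ ℝ, u*_{ij} ∈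 ℝ, g_j ∈ ℝ} (−q_i + u*_{ij} + g_j) ), where both sides lie in ℝ ∪ {−∞} and maxima over empty sets are −∞. (In max-plus notation: θ = (q^- ⊗ U* ⊗ p)^{⊗1/2} ⊕ h^- ⊗ U* ⊗ p ⊕ q^- ⊗ U* ⊗ g.) -/
section Stmt9Aux


open Finset

lemma er_real {a : EReal} (hb : a ≠ ⊥) (ht : a ≠ ⊤) : ∃ r : ℝ, a = (r : EReal) :=
  ⟨a.toReal, (EReal.coe_toReal ht hb).symm⟩

lemma er_add_iSup_le {ι : Sort*} {a c : EReal} {f : ι → EReal} (ha : a ≠ ⊤)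
    (h : ∀ i, a + f i ≤ c) : a + ⨆ i, f i ≤ c := by
  rcases isEmpty_or_nonempty ι with hι | hι
  · rw [iSup_of_empty]; simp [EReal.add_bot]
  · induction a with
    | bot => simp [EReal.bot_add]
    | coe r =>
      rcases eq_or_ne c ⊤ with rfl | hc
      · exact le_top
      have : (⨆ i, f i) ≤ c - (r : EReal) := by
        refine iSup_le fun i => ?_
        exact (EReal.le_sub_iff_add_le (Or.inl (EReal.coe_ne_bot r))
          (Or.inl (EReal.coe_ne_top r))).2 (by rw [add_comm]; exact h i)
      calc (r : EReal) + ⨆ i, f i ≤ (r : EReal) + (c - (r : EReal)) :=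
            add_le_add_right this _
        _ = c := by rw [add_comm, EReal.sub_add_cancel]
    | top => exact absurd rfl ha

lemma er_iSup_add_le {ι : Sort*} {a c : EReal} {f : ι → EReal} (ha : a ≠ ⊤)
    (h : ∀ i, f i + a ≤ c) : (⨆ i, f i) + a ≤ c := by
  rw [add_comm]; exact er_add_iSup_le ha fun i => by rw [add_comm]; exact h i

lemma er_fin_iSup_ne_top {m : ℕ} {s : Fin m → EReal} (hs : ∀ k, s k ≠ ⊤) :
    (⨆ k, s k) ≠ ⊤ := by
  have : (⨆ k, s k) = Finset.univ.sup s := by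
    rw [Finset.sup_eq_iSup]; simp
  rw [this]
  refine ne_top_of_lt (?_ : Finset.univ.sup s < ⊤)
  exact (Finset.sup_lt_iff (bot_lt_top)).2 fun i _ => (hs i).lt_top

lemma er_half_le {a c : EReal} (h : a ≤ c + c) : (((2:ℝ)⁻¹ : ℝ) : EReal) * a ≤ c := by
  have h2 : (0:ℝ) < 2⁻¹ := by norm_num
  induction c with
  | bot =>
    rw [EReal.add_bot] at h
    rw [le_bot_iff.1 h, EReal.coe_mul_bot_of_pos h2]
  | coe r =>
    induction a with
    | bot => rw [EReal.coe_mul_bot_of_pos h2]; exact bot_le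
    | coe s =>
      rw [← EReal.coe_add, ← EReal.coe_mul, EReal.coe_le_coe_iff] at *
      linarith
    | top =>
      rw [← EReal.coe_add, top_le_iff] at h
      exact absurd h (EReal.coe_ne_top _)
  | top => exact le_top

/-- walk weight -/
noncomputable def wSum {n : ℕ} (U : Fin n → Fin n → EReal) (m : ℕ) (f : ℕ → Fin n) : EReal :=
  ∑ t ∈ Finset.range m, U (f t) (f (t + 1))

variable {n : ℕ} {U : Fin n → Fin n → EReal}

lemma pow_eq_walk (hU : ∀ i j, U i j ≠ ⊤) (m : ℕ) (i j : Fin n) :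
    mpPow U m i j = ⨆ (f : ℕ → Fin n) (_ : f 0 = i ∧ f m = j), wSum U m f := by
  induction m generalizing j with
  | zero =>
    show mpId n i j = _
    unfold mpId
    rcases eq_or_ne i j with rfl | hij
    · simp only [if_pos rfl]
      apply le_antisymm
      · exact le_trans (by simp [wSum]) (le_iSup_of_le (fun _ => i) (le_iSup_of_le ⟨rfl, rfl⟩ le_rfl))
      · exact iSup_le fun f => iSup_le fun hf => by simp [wSum]
    · rw [if_neg hij]
      refine le_antisymm bot_le (iSup_le fun f => iSup_le fun hf => ?_)
      exact absurd (hf.1.symm.trans hf.2) hij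
  | succ m ih =>
    show mpMul (mpPow U m) U i j = _
    unfold mpMul
    apply le_antisymm
    · refine iSup_le fun k => ?_
      rw [ih k]
      refine er_iSup_add_le (hU k j) fun f => er_iSup_add_le (hU k j) fun hf => ?_
      set f' : ℕ → Fin n := fun t => if t ≤ m then f t else j with hf'
      have h0 : f' 0 = i := by simp [hf', hf.1]
      have hm1 : f' (m + 1) = j := by simp [hf']
      have hw : wSum U (m + 1) f' = wSum U m f + U k j := by
        unfold wSum
        rw [Finset.sum_range_succ]
        congr 1
        · refine Finset.sum_congr rfl fun t ht => ?_
          rw [Finset.mem_range] at ht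
          have h1 : t ≤ m := ht.le
          have h2 : t + 1 ≤ m := ht
          simp [hf', h1, h2]
        · have : ¬ (m + 1 ≤ m) := by omega
          simp [hf', this, hf.2]
      rw [← hw]
      refine le_iSup_of_le f' ?_
      exact le_iSup_of_le ⟨h0, hm1⟩ le_rfl
    · refine iSup_le fun f => iSup_le fun hf => ?_
      have : wSum U (m+1) f = wSum U m f + U (f m) j := by
        unfold wSum; rw [Finset.sum_range_succ, hf.2]
      rw [this]
      refine le_iSup_of_le (f m) ?_
      rw [ih (f m)]
      refine add_le_add_left ?_ _
      refine le_iSup_of_le f ?_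
      exact le_iSup_of_le ⟨hf.1, rfl⟩ le_rfl

lemma cycle_nonpos (hrho : rho U ≤ 0) {k : ℕ} (hk : 0 < k) {f : ℕ → Fin n}
    (hf : f k = f 0) : wSum U k f ≤ 0 := by
  have h1 : (((k : ℝ)⁻¹ : ℝ) : EReal) * wSum U k f ≤ rho U := by
    exact le_iSup_of_le k (le_iSup_of_le hk (le_iSup_of_le f (le_iSup_of_le hf le_rfl)))
  by_contra hpos
  push_neg at hpos
  have hkpos : (0:ℝ) < (k:ℝ)⁻¹ := by positivity
  have : (0:EReal) < (((k : ℝ)⁻¹ : ℝ) : EReal) * wSum U k f :=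
    EReal.mul_pos (by exact_mod_cast hkpos) hpos
  exact absurd (lt_of_lt_of_le this (h1.trans hrho)) (lt_irrefl _)

lemma pow_ne_top (hU : ∀ i j, U i j ≠ ⊤) : ∀ (m : ℕ) (i j : Fin n), mpPow U m i j ≠ ⊤ := by
  intro m
  induction m with
  | zero =>
    intro i j
    show mpId n i j ≠ ⊤
    unfold mpId; split <;> simp
  | succ m ih =>
    intro i j
    show mpMul (mpPow U m) U i j ≠ ⊤
    exact er_fin_iSup_ne_top fun k => (EReal.add_lt_top (ih i k) (hU k j)).ne

lemma star_ne_top (hU : ∀ i j, U i j ≠ ⊤) (i j : Fin n) : mpStar U i j ≠ ⊤ :=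
  er_fin_iSup_ne_top fun k => pow_ne_top hU k i j

lemma star_diag_nonneg (i : Fin n) : (0 : EReal) ≤ mpStar U i i := by
  refine le_iSup_of_le ⟨0, i.pos⟩ ?_
  show (0:EReal) ≤ mpPow U 0 i i
  show (0:EReal) ≤ mpId n i i
  simp [mpId]

lemma pow_le_star {m : ℕ} (hm : m < n) (i j : Fin n) : mpPow U m i j ≤ mpStar U i j :=
  le_iSup_of_le (⟨m, hm⟩ : Fin n) le_rfl

lemma pow_n_le_star (hU : ∀ i j, U i j ≠ ⊤) (hrho : rho U ≤ 0) (i j : Fin n) :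
    mpPow U n i j ≤ mpStar U i j := by
  rw [pow_eq_walk hU n i j]
  refine iSup_le fun f => iSup_le fun hf => ?_
  -- pigeonhole
  obtain ⟨a, ha, b, hb, hab, hfab⟩ :
      ∃ a ∈ Finset.range (n+1), ∃ b ∈ Finset.range (n+1), a ≠ b ∧ f a = f b := by
    refine Finset.exists_ne_map_eq_of_card_lt_of_maps_to ?_ (fun x _ => Finset.mem_univ (f x))
    simp
  rw [Finset.mem_range] at ha hb
  obtain ⟨a, b, hab, hbn, hfab⟩ : ∃ a b : ℕ, a < b ∧ b ≤ n ∧ f a = f b := by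
    rcases lt_or_gt_of_ne hab with hlt | hgt
    · exact ⟨a, b, hlt, by omega, hfab⟩
    · exact ⟨b, a, hgt, by omega, hfab.symm⟩
  set d := n - b with hd
  set c := b - a with hc
  set g : ℕ → Fin n := fun t => if t ≤ a then f t else f (t + c) with hg
  set e : ℕ → EReal := fun t => U (f t) (f (t+1)) with he
  have hS : wSum U n f = ((∑ t ∈ Finset.range a, e t) + ∑ t ∈ Finset.range c, e (a + t))
      + ∑ t ∈ Finset.range d, e (b + t) := by
    have h1 : wSum U n f = ∑ t ∈ Finset.range (a + c + d), e t := by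
      unfold wSum
      rw [show a + c + d = n by omega]
    have h3 : ∑ t ∈ Finset.range d, e (a + c + t) = ∑ t ∈ Finset.range d, e (b + t) :=
      Finset.sum_congr rfl fun t _ => by congr 1; omega
    rw [h1, Finset.sum_range_add, Finset.sum_range_add, h3]
  have hcyc : (∑ t ∈ Finset.range c, e (a + t)) ≤ 0 := by
    have : (∑ t ∈ Finset.range c, e (a + t)) = wSum U c (fun t => f (a + t)) := by
      unfold wSum
      refine Finset.sum_congr rfl fun t ht => ?_
      simp only [he]
      rfl
    rw [this]
    refine cycle_nonpos hrho (by omega) ?_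
    show f (a + c) = f (a + 0)
    rw [show a + c = b by omega, add_zero]
    exact hfab.symm
  have hG : wSum U (a + d) g = (∑ t ∈ Finset.range a, e t) + ∑ t ∈ Finset.range d, e (b + t) := by
    unfold wSum
    rw [Finset.sum_range_add]
    congr 1
    · refine Finset.sum_congr rfl fun t ht => ?_
      rw [Finset.mem_range] at ht
      have h1 : t ≤ a := ht.le
      have h2 : t + 1 ≤ a := ht
      simp [hg, h1, h2, he]
    · refine Finset.sum_congr rfl fun t ht => ?_
      have h2 : ¬ (a + t + 1 ≤ a) := by omega
      have heq1 : g (a + t) = f (b + t) := by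
        rcases Nat.eq_zero_or_pos t with rfl | htpos
        · simp only [hg, add_zero]
          rw [if_pos (le_refl a)]
          exact hfab
        · have : ¬ (a + t ≤ a) := by omega
          simp only [hg, if_neg this]
          congr 1
          omega
      have heq2 : g (a + t + 1) = f (b + t + 1) := by
        simp only [hg, if_neg h2]
        congr 1
        omega
      simp only [he, heq1, heq2]
  have hle : wSum U n f ≤ wSum U (a + d) g := by
    rw [hS, hG, add_right_comm]
    calc (∑ t ∈ Finset.range a, e t) + (∑ t ∈ Finset.range d, e (b + t))
          + ∑ t ∈ Finset.range c, e (a + t)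
        ≤ (∑ t ∈ Finset.range a, e t) + (∑ t ∈ Finset.range d, e (b + t)) + 0 :=
          add_le_add_right hcyc _
      _ = _ := add_zero _
  refine hle.trans ?_
  have hpow : wSum U (a + d) g ≤ mpPow U (a + d) i j := by
    rw [pow_eq_walk hU (a + d) i j]
    have hg0 : g 0 = i := by
      simp only [hg, if_pos (Nat.zero_le a)]
      exact hf.1
    have hgm : g (a + d) = j := by
      have : g (a + d) = f n := by
        by_cases hm : a + d ≤ a
        · have hbn' : b = n := by omega
          rw [show a + d = a by omega]
          simp only [hg]
          rw [if_pos (le_refl a), hfab, hbn']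
        · simp only [hg, if_neg hm]
          congr 1
          omega
      rw [this, hf.2]
    exact le_iSup_of_le g (le_iSup_of_le ⟨hg0, hgm⟩ le_rfl)
  refine hpow.trans (pow_le_star (by omega) i j)

lemma edge_into_pow (hU : ∀ i j, U i j ≠ ⊤) (k : ℕ) (i j m : Fin n) :
    U i j + mpPow U k j m ≤ mpPow U (k+1) i m := by
  rw [pow_eq_walk hU k j m, pow_eq_walk hU (k+1) i m]
  refine er_add_iSup_le (hU i j) fun f => er_add_iSup_le (hU i j) fun hf => ?_
  set f' : ℕ → Fin n := fun t => if t = 0 then i else f (t - 1) with hf'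
  have h0 : f' 0 = i := by simp [hf']
  have hk1 : f' (k+1) = m := by
    simp only [hf', if_neg (Nat.succ_ne_zero k), Nat.add_sub_cancel]
    exact hf.2
  have hw : wSum U (k+1) f' = U i j + wSum U k f := by
    unfold wSum
    rw [Finset.sum_range_succ']
    have h1 : U (f' 0) (f' (0 + 1)) = U i j := by simp [hf', hf.1]
    have h2 : ∀ t ∈ Finset.range k, U (f' (t + 1)) (f' (t + 1 + 1)) = U (f t) (f (t + 1)) := by
      intro t ht
      simp [hf']
    rw [Finset.sum_congr rfl h2, h1, add_comm]
  rw [← hw]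
  exact le_iSup_of_le f' (le_iSup_of_le ⟨h0, hk1⟩ le_rfl)

lemma edge_star (hU : ∀ i j, U i j ≠ ⊤) (hrho : rho U ≤ 0) (i j m : Fin n) :
    U i j + mpStar U j m ≤ mpStar U i m := by
  show U i j + ⨆ k : Fin n, mpPow U (k:ℕ) j m ≤ _
  refine er_add_iSup_le (hU i j) fun k => ?_
  refine (edge_into_pow hU (k:ℕ) i j m).trans ?_
  rcases lt_or_eq_of_le (Nat.succ_le_of_lt k.2) with hlt | heq
  · exact pow_le_star hlt i m
  · have heq' : (k : ℕ) + 1 = n := heq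
    rw [heq']
    exact pow_n_le_star hU hrho i m

lemma er_fin_iInf_ne_bot {m : ℕ} {s : Fin m → EReal} (hs : ∀ k, s k ≠ ⊥) :
    (⨅ k, s k) ≠ ⊥ := by
  have : (⨅ k, s k) = Finset.univ.inf s := by
    rw [Finset.inf_eq_iInf]; simp
  rw [this]
  refine ne_bot_of_gt (?_ : ⊥ < Finset.univ.inf s)
  exact (Finset.lt_inf_iff (bot_lt_top)).2 fun i _ => (hs i).bot_lt

lemma er_exists_real_le {b : EReal} (hb : b ≠ ⊥) : ∃ r : ℝ, (r : EReal) ≤ b := by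
  induction b with
  | bot => exact absurd rfl hb
  | coe r => exact ⟨r, le_rfl⟩
  | top => exact ⟨0, le_top⟩

end Stmt9Aux

/-- Pseudolinear optimization over an alcoved polyhedron: under `ρ(U) ≤ 0` and
`U* ⊗ g ≤ h`, the infimum of
`f(x) = max( max_{i : p i ∈ ℝ}(p i − x i), max_{i : q i ∈ ℝ}(x i − q i) )`
over `{x ∈ ℝ^n : g ≤ x ≤ h, U ⊗ x ≤ x}` equals
`θ = (q⁻ ⊗ U* ⊗ p)^{⊗1/2} ⊕ h⁻ ⊗ U* ⊗ p ⊕ q⁻ ⊗ U* ⊗ g`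
(maxima over indices where all participating entries are finite; empty maxima `−∞`). -/
theorem stmt9 (n : ℕ) (U : Fin n → Fin n → EReal) (g h p q : Fin n → EReal)
    (hU : ∀ i j, U i j ≠ ⊤) (hg : ∀ i, g i ≠ ⊤) (hh : ∀ i, h i ≠ ⊥)
    (hp : ∀ i, p i ≠ ⊤) (hq : ∀ i, q i ≠ ⊥)
    (hrho : rho U ≤ 0) (hgh : ∀ i, (⨆ j, mpStar U i j + g j) ≤ h i) :
    (⨅ (x : Fin n → ℝ)
        (_ : ∀ i, g i ≤ (x i : EReal) ∧ (x i : EReal) ≤ h i ∧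
          (⨆ j, U i j + (x j : EReal)) ≤ (x i : EReal)),
        ((⨆ (i) (_ : p i ≠ ⊥), (p i - (x i : EReal))) ⊔
         (⨆ (i) (_ : q i ≠ ⊤), ((x i : EReal) - q i)))) =
      ((((2 : ℝ)⁻¹ : ℝ) : EReal) *
        ⨆ (i) (j) (_ : q i ≠ ⊤) (_ : mpStar U i j ≠ ⊥) (_ : p j ≠ ⊥),
          (-(q i) + mpStar U i j + p j)) ⊔
      (⨆ (i) (j) (_ : h i ≠ ⊤) (_ : mpStar U i j ≠ ⊥) (_ : p j ≠ ⊥),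
          (-(h i) + mpStar U i j + p j)) ⊔
      (⨆ (i) (j) (_ : q i ≠ ⊤) (_ : mpStar U i j ≠ ⊥) (_ : g j ≠ ⊥),
          (-(q i) + mpStar U i j + g j)) := by
  classical
  rcases Nat.eq_zero_or_pos n with hn0 | hn
  · subst hn0
    simp only [iSup_of_empty]
    rw [EReal.coe_mul_bot_of_pos (by norm_num : (0:ℝ) < 2⁻¹)]
    simp only [sup_idem, bot_sup_eq, sup_bot_eq]
    apply le_antisymm
    · exact iInf₂_le (fun i => (0:ℝ)) (fun i => i.elim0)
    · exact bot_le
  have hstop : ∀ i j, mpStar U i j ≠ ⊤ := star_ne_top hU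
  apply le_antisymm
  · -- iInf ≤ RHS
    refine EReal.le_of_forall_lt_iff_le.1 fun t ht => ?_
    set v : Fin n → EReal := fun m => g m ⊔ (p m - (t : EReal)) with hv
    set s : Fin n → EReal := fun i => ⨆ m, mpStar U i m + v m with hs
    set W : Fin n → EReal := fun i => ⨆ m, mpStar U i m with hW
    have hvtop : ∀ m, v m ≠ ⊤ := by
      intro m
      refine ne_top_of_lt (?_ : v m < ⊤)
      refine sup_lt_iff.2 ⟨(hg m).lt_top, ?_⟩
      rw [sub_eq_add_neg, ← EReal.coe_neg]
      exact EReal.add_lt_top (hp m) (EReal.coe_ne_top _)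
    have hstopv : ∀ i, s i ≠ ⊤ :=
      fun i => er_fin_iSup_ne_top fun m => (EReal.add_lt_top (hstop i m) (hvtop m)).ne
    have hWtop : ∀ i, W i ≠ ⊤ := fun i => er_fin_iSup_ne_top fun m => hstop i m
    have hWbot : ∀ i, W i ≠ ⊥ := by
      intro i hb
      have h0 : (0:EReal) ≤ W i := (star_diag_nonneg i).trans (le_iSup (fun m => mpStar U i m) i)
      rw [hb, le_bot_iff] at h0
      simp at h0
    have hvs : ∀ i, v i ≤ s i := by
      intro i
      refine le_trans ?_ (le_iSup (fun m => mpStar U i m + v m) i)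
      calc v i = 0 + v i := (zero_add _).symm
        _ ≤ mpStar U i i + v i := add_le_add_left (star_diag_nonneg i) _
    have hsh : ∀ i, s i ≤ h i := by
      intro i
      refine iSup_le fun m => ?_
      simp only [hv]
      rcases le_total (g m) (p m - (t:EReal)) with hc | hc
      · rw [sup_eq_right.2 hc]
        rcases eq_or_ne (h i) ⊤ with h1 | h1
        · rw [h1]; exact le_top
        rcases eq_or_ne (mpStar U i m) ⊥ with h2 | h2
        · rw [h2, EReal.bot_add]; exact bot_le
        rcases eq_or_ne (p m) ⊥ with h3 | h3
        · rw [h3, EReal.bot_sub, EReal.add_bot]; exact bot_le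
        obtain ⟨hi, hhi⟩ := er_real (hh i) h1
        obtain ⟨sij, hsij⟩ := er_real h2 (hstop i m)
        obtain ⟨pm, hpm⟩ := er_real h3 (hp m)
        have hlt : -(h i) + mpStar U i m + p m < (t:EReal) := by
          refine lt_of_le_of_lt (le_trans ?_ (le_trans le_sup_right le_sup_left)) ht
          refine le_iSup_of_le i ?_
          refine le_iSup_of_le m ?_
          refine le_iSup_of_le h1 ?_
          refine le_iSup_of_le h2 ?_
          exact le_iSup_of_le h3 le_rfl
        rw [hhi, hsij, hpm] at hlt ⊢
        have hlt' : -hi + sij + pm < t := by exact_mod_cast hlt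
        exact_mod_cast (show sij + (pm - t) ≤ hi by linarith)
      · rw [sup_eq_left.2 hc]
        exact (le_iSup (fun m' => mpStar U i m' + g m') m).trans (hgh i)
    have hsq : ∀ i, s i ≤ q i + (t:EReal) := by
      intro i
      rcases eq_or_ne (q i) ⊤ with h0 | h0
      · rw [h0, EReal.top_add_coe]; exact le_top
      obtain ⟨qi, hqi⟩ := er_real (hq i) h0
      refine iSup_le fun m => ?_
      simp only [hv]
      rcases le_total (g m) (p m - (t:EReal)) with hc | hc
      · rw [sup_eq_right.2 hc]
        rcases eq_or_ne (mpStar U i m) ⊥ with h2 | h2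
        · rw [h2, EReal.bot_add]; exact bot_le
        rcases eq_or_ne (p m) ⊥ with h3 | h3
        · rw [h3, EReal.bot_sub, EReal.add_bot]; exact bot_le
        obtain ⟨sij, hsij⟩ := er_real h2 (hstop i m)
        obtain ⟨pm, hpm⟩ := er_real h3 (hp m)
        have hterm : (((-qi + sij + pm : ℝ)) : EReal) ≤
            (⨆ (i) (j) (_ : q i ≠ ⊤) (_ : mpStar U i j ≠ ⊥) (_ : p j ≠ ⊥),
              (-(q i) + mpStar U i j + p j)) := by
          refine le_iSup_of_le i (le_iSup_of_le m (le_iSup_of_le h0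
            (le_iSup_of_le h2 (le_iSup_of_le h3 ?_))))
          exact le_of_eq (by rw [hqi, hsij, hpm]; push_cast; ring_nf)
        have hhalf : (((2:ℝ)⁻¹ : ℝ) : EReal) *
            (⨆ (i) (j) (_ : q i ≠ ⊤) (_ : mpStar U i j ≠ ⊥) (_ : p j ≠ ⊥),
              (-(q i) + mpStar U i j + p j)) < (t : EReal) :=
          lt_of_le_of_lt (le_trans le_sup_left le_sup_left) ht
        set S := (⨆ (i) (j) (_ : q i ≠ ⊤) (_ : mpStar U i j ≠ ⊥) (_ : p j ≠ ⊥),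
              (-(q i) + mpStar U i j + p j)) with hS
        have hSne : S ≠ ⊤ := by
          intro hT
          rw [hT, EReal.coe_mul_top_of_pos (by norm_num : (0:ℝ) < 2⁻¹)] at hhalf
          exact not_top_lt hhalf
        have hSnb : S ≠ ⊥ := fun hB => by
          rw [hB, le_bot_iff] at hterm
          exact (EReal.coe_ne_bot _) hterm
        obtain ⟨Sv, hSv⟩ := er_real hSnb hSne
        rw [hSv] at hhalf hterm
        rw [← EReal.coe_mul, EReal.coe_lt_coe_iff] at hhalf
        rw [EReal.coe_le_coe_iff] at hterm
        rw [hsij, hpm, hqi]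
        exact_mod_cast (show sij + (pm - t) ≤ qi + t by linarith)
      · rw [sup_eq_left.2 hc]
        rcases eq_or_ne (mpStar U i m) ⊥ with h2 | h2
        · rw [h2, EReal.bot_add]; exact bot_le
        rcases eq_or_ne (g m) ⊥ with h3 | h3
        · rw [h3, EReal.add_bot]; exact bot_le
        obtain ⟨sij, hsij⟩ := er_real h2 (hstop i m)
        obtain ⟨gm, hgm⟩ := er_real h3 (hg m)
        have hlt : -(q i) + mpStar U i m + g m < (t:EReal) := by
          refine lt_of_le_of_lt (le_trans ?_ le_sup_right) ht
          refine le_iSup_of_le i ?_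
          refine le_iSup_of_le m ?_
          refine le_iSup_of_le h0 ?_
          refine le_iSup_of_le h2 ?_
          exact le_iSup_of_le h3 le_rfl
        rw [hqi, hsij, hgm] at hlt ⊢
        have hlt' : -qi + sij + gm < t := by exact_mod_cast hlt
        exact_mod_cast (show sij + gm ≤ qi + t by linarith)
    have hUs : ∀ i, (⨆ j, U i j + s j) ≤ s i := by
      intro i
      refine iSup_le fun j => ?_
      rw [hs]
      refine er_add_iSup_le (hU i j) fun m => ?_
      calc U i j + (mpStar U j m + v m) = (U i j + mpStar U j m) + v m := (add_assoc _ _ _).symm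
        _ ≤ mpStar U i m + v m := add_le_add_left (edge_star hU hrho i j m) _
        _ ≤ ⨆ m', mpStar U i m' + v m' := le_iSup (fun m' => mpStar U i m' + v m') m
    have hUW : ∀ i j, U i j + W j ≤ W i := by
      intro i j
      rw [hW]
      refine er_add_iSup_le (hU i j) fun m => (edge_star hU hrho i j m).trans
        (le_iSup (fun m' => mpStar U i m') m)
    have hBne : ∀ i, (h i - W i) ⊓ ((q i + (t:EReal)) - W i) ≠ ⊥ := by
      intro i
      obtain ⟨wi, hwi⟩ := er_real (hWbot i) (hWtop i)
      have e1 : h i - W i ≠ ⊥ := by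
        rw [hwi]
        rcases eq_or_ne (h i) ⊤ with h1 | h1
        · rw [h1, EReal.top_sub_coe]; simp
        · obtain ⟨hi, hhi⟩ := er_real (hh i) h1
          rw [hhi, ← EReal.coe_sub]; exact EReal.coe_ne_bot _
      have e2 : (q i + (t:EReal)) - W i ≠ ⊥ := by
        rw [hwi]
        rcases eq_or_ne (q i) ⊤ with h1 | h1
        · rw [h1, EReal.top_add_coe, EReal.top_sub_coe]; simp
        · obtain ⟨qi, hqi⟩ := er_real (hq i) h1
          rw [hqi, ← EReal.coe_add, ← EReal.coe_sub]; exact EReal.coe_ne_bot _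
      rcases le_total (h i - W i) ((q i + (t:EReal)) - W i) with hm | hm
      · rw [inf_eq_left.2 hm]; exact e1
      · rw [inf_eq_right.2 hm]; exact e2
    obtain ⟨lam, hlam⟩ := er_exists_real_le (er_fin_iInf_ne_bot hBne)
    have hlamB : ∀ i, (lam : EReal) ≤ (h i - W i) ⊓ ((q i + (t:EReal)) - W i) :=
      fun i => hlam.trans (iInf_le _ i)
    have hlamh : ∀ i, (lam : EReal) + W i ≤ h i := fun i =>
      (EReal.le_sub_iff_add_le (Or.inl (hWbot i)) (Or.inl (hWtop i))).1
        ((hlamB i).trans inf_le_left)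
    have hlamq : ∀ i, (lam : EReal) + W i ≤ q i + (t:EReal) := fun i =>
      (EReal.le_sub_iff_add_le (Or.inl (hWbot i)) (Or.inl (hWtop i))).1
        ((hlamB i).trans inf_le_right)
    set σ : Fin n → EReal := fun i => s i ⊔ ((lam:EReal) + W i) with hσ
    have hσtop : ∀ i, σ i ≠ ⊤ := by
      intro i
      refine ne_top_of_lt (sup_lt_iff.2 ⟨(hstopv i).lt_top, ?_⟩)
      obtain ⟨wi, hwi⟩ := er_real (hWbot i) (hWtop i)
      rw [hwi, ← EReal.coe_add]
      exact (EReal.coe_ne_top _).lt_top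
    have hσbot : ∀ i, σ i ≠ ⊥ := by
      intro i hb
      obtain ⟨wi, hwi⟩ := er_real (hWbot i) (hWtop i)
      have hle : (lam:EReal) + W i ≤ ⊥ := hb ▸ le_sup_right
      rw [hwi, ← EReal.coe_add, le_bot_iff] at hle
      exact (EReal.coe_ne_bot _) hle
    set x : Fin n → ℝ := fun i => (σ i).toReal with hxd
    have hxσ : ∀ i, ((x i : ℝ) : EReal) = σ i := fun i => EReal.coe_toReal (hσtop i) (hσbot i)
    have hvσ : ∀ i, v i ≤ σ i := fun i => (hvs i).trans le_sup_left
    have hfeas : ∀ i, g i ≤ (x i : EReal) ∧ (x i : EReal) ≤ h i ∧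
        (⨆ j, U i j + (x j : EReal)) ≤ (x i : EReal) := by
      intro i
      refine ⟨?_, ?_, ?_⟩
      · rw [hxσ]
        refine le_trans ?_ (hvσ i)
        rw [hv]
        exact le_sup_left
      · rw [hxσ]
        exact sup_le (hsh i) (hlamh i)
      · have hrw : (⨆ j, U i j + (x j : EReal)) = ⨆ j, U i j + σ j :=
          iSup_congr fun j => by rw [hxσ j]
        rw [hrw, hxσ]
        refine iSup_le fun j => ?_
        rcases le_total (s j) ((lam:EReal) + W j) with hc | hc
        · simp only [hσ]
          rw [sup_eq_right.2 hc]
          calc U i j + ((lam:EReal) + W j) = (lam:EReal) + (U i j + W j) := by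
                rw [← add_assoc, add_comm (U i j) ((lam:EReal)), add_assoc]
            _ ≤ (lam:EReal) + W i := add_le_add_right (hUW i j) _
            _ ≤ s i ⊔ ((lam:EReal) + W i) := le_sup_right
        · simp only [hσ]
          rw [sup_eq_left.2 hc]
          exact le_sup_of_le_left ((le_iSup (fun j' => U i j' + s j') j).trans (hUs i))
    refine le_trans (iInf₂_le x hfeas) ?_
    refine sup_le ?_ ?_
    · refine iSup_le fun i => iSup_le fun hpi => ?_
      obtain ⟨pi, hpi'⟩ := er_real hpi (hp i)
      have h1 : p i - (t:EReal) ≤ (x i : EReal) := by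
        rw [hxσ]
        refine le_trans ?_ (hvσ i)
        rw [hv]
        exact le_sup_right
      rw [hpi'] at h1 ⊢
      rw [← EReal.coe_sub, EReal.coe_le_coe_iff] at h1
      exact_mod_cast (show pi - x i ≤ t by linarith)
    · refine iSup_le fun i => iSup_le fun hqi => ?_
      obtain ⟨qi, hqi'⟩ := er_real (hq i) hqi
      have h1 : (x i : EReal) ≤ q i + (t:EReal) := by
        rw [hxσ]
        exact sup_le (hsq i) (hlamq i)
      rw [hqi'] at h1 ⊢
      rw [← EReal.coe_add, EReal.coe_le_coe_iff] at h1
      exact_mod_cast (show x i - qi ≤ t by linarith)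
  · -- RHS ≤ iInf
    refine le_iInf fun x => le_iInf fun hx => ?_
    have hpowdom : ∀ (m : ℕ) (i j : Fin n), mpPow U m i j + (x j : EReal) ≤ (x i : EReal) := by
      intro m
      induction m with
      | zero =>
        intro i j
        show mpId n i j + _ ≤ _
        unfold mpId
        rcases eq_or_ne i j with rfl | hij
        · rw [if_pos rfl, zero_add]
        · rw [if_neg hij, EReal.bot_add]; exact bot_le
      | succ m ih =>
        intro i j
        show mpMul (mpPow U m) U i j + _ ≤ _
        unfold mpMul
        refine er_iSup_add_le (EReal.coe_ne_top _) fun l => ?_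
        calc mpPow U m i l + U l j + (x j : EReal)
            = mpPow U m i l + (U l j + (x j : EReal)) := add_assoc _ _ _
          _ ≤ mpPow U m i l + (x l : EReal) :=
              add_le_add_right ((le_iSup (fun j' => U l j' + (x j' : EReal)) j).trans
                (hx l).2.2) _
          _ ≤ _ := ih i l
    have hdom : ∀ i j, mpStar U i j + (x j : EReal) ≤ (x i : EReal) := by
      intro i j
      refine er_iSup_add_le (EReal.coe_ne_top _) fun k => hpowdom k i j
    have hFq : ∀ i, q i ≠ ⊤ → ((x i : EReal) - q i) ≤
        ((⨆ (i) (_ : p i ≠ ⊥), (p i - (x i : EReal))) ⊔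
         (⨆ (i) (_ : q i ≠ ⊤), ((x i : EReal) - q i))) := by
      intro i hqi
      exact le_sup_of_le_right (le_iSup_of_le i (le_iSup_of_le hqi le_rfl))
    have hFp : ∀ j, p j ≠ ⊥ → (p j - (x j : EReal)) ≤
        ((⨆ (i) (_ : p i ≠ ⊥), (p i - (x i : EReal))) ⊔
         (⨆ (i) (_ : q i ≠ ⊤), ((x i : EReal) - q i))) := by
      intro j hpj
      exact le_sup_of_le_left (le_iSup_of_le j (le_iSup_of_le hpj le_rfl))
    refine sup_le (sup_le ?_ ?_) ?_
    · -- half term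
      refine er_half_le ?_
      refine iSup_le fun i => iSup_le fun j => iSup_le fun h1 => iSup_le fun h2 =>
        iSup_le fun h3 => ?_
      obtain ⟨qi, hqi⟩ := er_real (hq i) h1
      obtain ⟨sij, hsij⟩ := er_real h2 (hstop i j)
      obtain ⟨pj, hpj⟩ := er_real h3 (hp j)
      have hsx : sij + x j ≤ x i := by
        have := hdom i j
        rw [hsij, ← EReal.coe_add, EReal.coe_le_coe_iff] at this
        exact this
      calc -(q i) + mpStar U i j + p j = ((-qi + sij + pj : ℝ) : EReal) := by
            rw [hqi, hsij, hpj]; push_cast; ring_nf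
        _ ≤ (((x i - qi) + (pj - x j) : ℝ) : EReal) := by
            rw [EReal.coe_le_coe_iff]; linarith
        _ = ((x i : EReal) - q i) + (p j - (x j : EReal)) := by
            rw [hqi, hpj]; push_cast; ring_nf
        _ ≤ _ := add_le_add (hFq i h1) (hFp j h3)
    · refine iSup_le fun i => iSup_le fun j => iSup_le fun h1 => iSup_le fun h2 =>
        iSup_le fun h3 => ?_
      obtain ⟨hi, hhi⟩ := er_real (hh i) h1
      obtain ⟨sij, hsij⟩ := er_real h2 (hstop i j)
      obtain ⟨pj, hpj⟩ := er_real h3 (hp j)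
      have hsx : sij + x j ≤ x i := by
        have := hdom i j
        rw [hsij, ← EReal.coe_add, EReal.coe_le_coe_iff] at this
        exact this
      have hxh : (x i : ℝ) ≤ hi := by
        have := (hx i).2.1
        rw [hhi, EReal.coe_le_coe_iff] at this
        exact this
      refine le_trans ?_ (hFp j h3)
      calc -(h i) + mpStar U i j + p j = ((-hi + sij + pj : ℝ) : EReal) := by
            rw [hhi, hsij, hpj]; push_cast; ring_nf
        _ ≤ ((pj - x j : ℝ) : EReal) := by
            rw [EReal.coe_le_coe_iff]; linarith
        _ = p j - (x j : EReal) := by rw [hpj]; push_cast; ring_nf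
    · refine iSup_le fun i => iSup_le fun j => iSup_le fun h1 => iSup_le fun h2 =>
        iSup_le fun h3 => ?_
      obtain ⟨qi, hqi⟩ := er_real (hq i) h1
      obtain ⟨sij, hsij⟩ := er_real h2 (hstop i j)
      obtain ⟨gj, hgj⟩ := er_real h3 (hg j)
      have hsx : sij + x j ≤ x i := by
        have := hdom i j
        rw [hsij, ← EReal.coe_add, EReal.coe_le_coe_iff] at this
        exact this
      have hxg : gj ≤ x j := by
        have := (hx j).1
        rw [hgj, EReal.coe_le_coe_iff] at this
        exact this
      refine le_trans ?_ (hFq i h1)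
      calc -(q i) + mpStar U i j + g j = ((-qi + sij + gj : ℝ) : EReal) := by
            rw [hqi, hsij, hgj]; push_cast; ring_nf
        _ ≤ ((x i - qi : ℝ) : EReal) := by
            rw [EReal.coe_le_coe_iff]; linarith
        _ = (x i : EReal) - q i := by rw [hqi]; push_cast; ring_nf
end

section
/- Let U ∈ ℝ_max^{n×n} with ρ(U) ≤ 0, let U* = I ⊕ U ⊕ ⋯ ⊕ U^{n−1} with entries u*_{ij}, let g ∈ ℝ_max^n, h ∈ (ℝ ∪ {+∞})^n with U* ⊗ g ≤ h, let p ∈ ℝ_max^n, q ∈ (ℝ ∪ {+∞})^n, and suppose θ := max( (1/2)·max_{i,j}(−q_i + u*_{ij} + p_j), max_{i,j}(−h_i + u*_{ij} + p_j), max_{i,j}(−q_i + u*_{ij} + g_j) ) (maxima over indices where all summands are finite, empty maxima being −∞) is a real number. Then the set of minimizers { x ∈ ℝ^n : g ≤ x ≤ h, U ⊗ x ≤ x, f(x) = θ }, where f(x) = max( max_{i : p_i ∈ ℝ}(p_i − x_i), max_{i : q_i ∈ ℝ}(x_i − q_i) ), equals { U* ⊗ v : v ∈ ℝ^n and for every j: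 max(g_j, p_j − θ) ≤ v_j ≤ min_i ( −u*_{ij} + min(θ + q_i, h_i) ) }, where in the upper bound −u*_{ij} = +∞ when u*_{ij} = −∞, θ + q_i = +∞ when q_i = +∞, and the minimum over an empty set is +∞. -/
private lemma er_isup_attained {ι : Type*} [Finite ι] [Nonempty ι] (f : ι → EReal) :
    ∃ k, (⨆ i, f i) = f k := by
  obtain ⟨k, hk⟩ := Finite.exists_max f
  exact ⟨k, le_antisymm (iSup_le hk) (le_iSup f k)⟩

private lemma er_le_neg_add (r : ℝ) (a b : EReal) :
    a ≤ -(r : EReal) + b ↔ (r : EReal) + a ≤ b := by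
  induction b with
  | bot =>
    rw [EReal.add_bot, le_bot_iff, le_bot_iff]
    constructor
    · rintro rfl; exact EReal.add_bot _
    · intro h; cases a with
      | bot => rfl
      | coe x => simp [← EReal.coe_add] at h
      | top => rw [EReal.add_top_of_ne_bot (EReal.coe_ne_bot r)] at h; exact absurd h bot_ne_top.symm
  | coe y =>
    induction a with
    | bot => simp [EReal.add_bot, bot_le]
    | coe x =>
      rw [← EReal.coe_neg, ← EReal.coe_add, ← EReal.coe_add, EReal.coe_le_coe_iff,
        EReal.coe_le_coe_iff]
      constructor <;> intro hh <;> linarith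
    | top =>
      rw [EReal.add_top_of_ne_bot (EReal.coe_ne_bot r), ← EReal.coe_neg, ← EReal.coe_add]
      simp only [top_le_iff]
      exact ⟨fun hh => absurd hh (EReal.coe_ne_top _), fun hh => absurd hh (EReal.coe_ne_top _)⟩
  | top =>
    rw [EReal.add_top_of_ne_bot (x := -(r : EReal)) (by rw [← EReal.coe_neg]; exact EReal.coe_ne_bot _)]
    exact ⟨fun _ => le_top, fun _ => le_top⟩
private lemma er_isup_add {ι : Sort*} [Nonempty ι] (f : ι → EReal) (c : EReal) :
    (⨆ i, f i) + c = ⨆ i, f i + c := by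
  refine le_antisymm ?_ (iSup_le fun i => add_le_add_left (le_iSup f i) c)
  induction c with
  | bot =>
    rw [EReal.add_bot]
    exact le_iSup_of_le (Classical.arbitrary ι) (by rw [EReal.add_bot])
  | coe r =>
    rw [add_comm, ← er_le_neg_add]
    exact iSup_le fun i => (er_le_neg_add r (f i) _).mpr
      (by rw [add_comm]; exact le_iSup (fun i => f i + (r:EReal)) i)
  | top =>
    by_cases hb : (⨆ i, f i) = ⊥
    · rw [hb, EReal.bot_add]; exact bot_le
    · rw [EReal.add_top_of_ne_bot hb]
      obtain ⟨i, hi⟩ : ∃ i, f i ≠ ⊥ := by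
        by_contra hc; push_neg at hc; exact hb (by simp [iSup_eq_bot, hc])
      exact le_iSup_of_le i (by rw [EReal.add_top_of_ne_bot hi])

private lemma er_add_isup {ι : Sort*} [Nonempty ι] (f : ι → EReal) (c : EReal) :
    c + (⨆ i, f i) = ⨆ i, c + f i := by
  rw [add_comm, er_isup_add]; simp_rw [add_comm]

private lemma er_prop_isup_add (P : Prop) (a c : EReal) :
    (⨆ (_ : P), a) + c = ⨆ (_ : P), (a + c) := by
  by_cases hP : P <;> simp [hP, EReal.bot_add]

private lemma er_isup_ne_top {ι : Type*} [Finite ι] (f : ι → EReal) (h : ∀ i, f i ≠ ⊤) :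
    (⨆ i, f i) ≠ ⊤ := by
  cases isEmpty_or_nonempty ι with
  | inl h' => simp [iSup_of_empty]
  | inr h' => obtain ⟨k, hk⟩ := er_isup_attained f; rw [hk]; exact h k


private lemma mpPow_succ_def {n : ℕ} (A : Fin n → Fin n → EReal) (m : ℕ) (i j : Fin n) :
    mpPow A (m+1) i j = ⨆ k, mpPow A m i k + A k j := rfl

private lemma mpPow_ne_top {n : ℕ} {A : Fin n → Fin n → EReal} (hA : ∀ i j, A i j ≠ ⊤) :
    ∀ m i j, mpPow A m i j ≠ ⊤
  | 0, i, j => by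
    show mpId n i j ≠ ⊤
    unfold mpId; split
    · exact EReal.zero_ne_top
    · exact bot_ne_top
  | m+1, i, j => er_isup_ne_top _ fun k =>
      (EReal.add_lt_top (mpPow_ne_top hA m i k) (hA k j)).ne

private lemma mpStar_ne_top {n : ℕ} {A : Fin n → Fin n → EReal} (hA : ∀ i j, A i j ≠ ⊤)
    (i j : Fin n) : mpStar A i j ≠ ⊤ :=
  er_isup_ne_top _ fun k => mpPow_ne_top hA _ i j

private lemma mpStar_diag {n : ℕ} (A : Fin n → Fin n → EReal) (i : Fin n) :
    (0 : EReal) ≤ mpStar A i i := by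
  refine le_trans ?_ (le_iSup (fun k : Fin n => mpPow A (k:ℕ) i i) ⟨0, i.pos⟩)
  show (0:EReal) ≤ mpId n i i
  simp [mpId]

private lemma pathSum_le_mpPow {n : ℕ} (A : Fin n → Fin n → EReal) :
    ∀ (m : ℕ) (f : ℕ → Fin n),
      ∑ t ∈ Finset.range m, A (f t) (f (t+1)) ≤ mpPow A m (f 0) (f m)
  | 0, f => by
    show _ ≤ mpId n (f 0) (f 0)
    simp [mpId]
  | m+1, f => by
    rw [Finset.sum_range_succ, mpPow_succ_def]
    exact le_trans (add_le_add_left (pathSum_le_mpPow A m f) _)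
      (le_iSup (fun k => mpPow A m (f 0) k + A k (f (m+1))) (f m))

private lemma mpPow_le_pathSup {n : ℕ} (A : Fin n → Fin n → EReal) (m : ℕ) (i j : Fin n) :
    mpPow A m i j ≤ ⨆ (f : ℕ → Fin n) (_ : f 0 = i ∧ f m = j),
      ∑ t ∈ Finset.range m, A (f t) (f (t+1)) := by
  haveI : Nonempty (Fin n) := ⟨i⟩
  induction m generalizing j with
  | zero =>
    show mpId n i j ≤ _
    by_cases hij : i = j
    · subst hij
      refine le_trans ?_ (le_iSup _ (fun _ => i))
      rw [iSup_pos ⟨rfl, rfl⟩]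
      simp [mpId]
    · simp [mpId, hij]
  | succ m ih =>
    rw [mpPow_succ_def]
    refine iSup_le fun k => ?_
    refine le_trans (add_le_add_left (ih k) (A k j)) ?_
    rw [er_isup_add]
    refine iSup_le fun f => ?_
    rw [er_prop_isup_add]
    refine iSup_le fun hf => ?_
    set f' : ℕ → Fin n := fun t => if t ≤ m then f t else j with hf'
    have h0 : f' 0 = i := by rw [hf']; simpa using hf.1
    have hm1 : f' (m+1) = j := if_neg (by omega)
    have hsum : ∑ t ∈ Finset.range (m+1), A (f' t) (f' (t+1)) =
        (∑ t ∈ Finset.range m, A (f t) (f (t+1))) + A k j := by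
      rw [Finset.sum_range_succ]
      congr 1
      · refine Finset.sum_congr rfl fun t ht => ?_
        have ht' : t < m := Finset.mem_range.mp ht
        have e1 : f' t = f t := if_pos (by omega)
        have e2 : f' (t+1) = f (t+1) := if_pos (by omega)
        rw [e1, e2]
      · have e1 : f' m = f m := if_pos le_rfl
        rw [e1, hf.2, hm1]
    rw [← hsum]
    exact le_iSup_of_le f' (le_iSup_of_le ⟨h0, hm1⟩ le_rfl)

private lemma cycle_sum_nonpos {n : ℕ} {U : Fin n → Fin n → EReal} (hrho : rho U ≤ 0)
    (k : ℕ) (hk : 0 < k) (F : ℕ → Fin n) (hF : F k = F 0) :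
    ∑ t ∈ Finset.range k, U (F t) (F (t+1)) ≤ 0 := by
  set S := ∑ t ∈ Finset.range k, U (F t) (F (t+1)) with hS
  have h1 : (((k:ℝ)⁻¹ : ℝ) : EReal) * S ≤ rho U :=
    le_iSup_of_le k (le_iSup_of_le hk (le_iSup_of_le F (le_iSup_of_le hF le_rfl)))
  have h2 : (((k:ℝ)⁻¹ : ℝ) : EReal) * S ≤ 0 := h1.trans hrho
  have hkpos : (0:ℝ) < (k:ℝ)⁻¹ := by positivity
  clear_value S
  induction S with
  | bot => exact bot_le
  | coe s =>
    rw [← EReal.coe_mul] at h2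
    have : (k:ℝ)⁻¹ * s ≤ 0 := by exact_mod_cast h2
    have hs : s ≤ 0 := by nlinarith
    exact_mod_cast hs
  | top =>
    rw [EReal.coe_mul_top_of_pos hkpos] at h2
    exact absurd (top_le_iff.mp (h2.trans (le_of_eq rfl))) (by simp)

private lemma cut_sum {n : ℕ} (A : Fin n → Fin n → EReal) (f : ℕ → Fin n) (a b m : ℕ)
    (hab : a < b) (hbm : b ≤ m) (hfab : f a = f b) :
    ∑ t ∈ Finset.range m, A (f t) (f (t+1)) =
      (∑ t ∈ Finset.Ico a b, A (f t) (f (t+1))) +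
      ∑ t ∈ Finset.range (m - (b-a)),
        A ((fun t => if t < a then f t else f (t + (b-a))) t)
          ((fun t => if t < a then f t else f (t + (b-a))) (t+1)) := by
  set d := b - a with hd
  set g : ℕ → Fin n := fun t => if t < a then f t else f (t + d) with hg
  have hadb : a + d = b := by omega
  have ham : a ≤ m - d := by omega
  -- initial segment of g agrees with f
  have hinit : ∀ t < a, A (g t) (g (t+1)) = A (f t) (f (t+1)) := by
    intro t ht
    have e1 : g t = f t := if_pos ht
    have e2 : g (t+1) = f (t+1) := by
      by_cases h' : t + 1 < a
      · exact if_pos h'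
      · have : t + 1 = a := by omega
        rw [hg]; simp only [h', if_neg, if_false]
        rw [this, hadb, ← hfab]
    rw [e1, e2]
  -- middle shift
  have hmid : ∀ t, a ≤ t → A (g t) (g (t+1)) = A (f (t+d)) (f (t+d+1)) := by
    intro t ht
    have e1 : g t = f (t+d) := if_neg (by omega)
    have e2 : g (t+1) = f (t+1+d) := if_neg (by omega)
    have e3 : t + 1 + d = t + d + 1 := by omega
    rw [e1, e2, e3]
  have split_f : ∑ t ∈ Finset.range m, A (f t) (f (t+1)) =
      ((∑ t ∈ Finset.Ico 0 a, A (f t) (f (t+1))) + ∑ t ∈ Finset.Ico a b, A (f t) (f (t+1)))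
        + ∑ t ∈ Finset.Ico b m, A (f t) (f (t+1)) := by
    rw [Finset.sum_Ico_consecutive _ (by omega : (0:ℕ) ≤ a) (by omega : a ≤ b),
      Finset.sum_Ico_consecutive _ (by omega : (0:ℕ) ≤ b) hbm, Finset.range_eq_Ico]
  have split_g : ∑ t ∈ Finset.range (m - d), A (g t) (g (t+1)) =
      (∑ t ∈ Finset.Ico 0 a, A (g t) (g (t+1))) + ∑ t ∈ Finset.Ico a (m-d), A (g t) (g (t+1)) := by
    rw [Finset.sum_Ico_consecutive _ (by omega : (0:ℕ) ≤ a) ham, Finset.range_eq_Ico]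
  have eq1 : ∑ t ∈ Finset.Ico 0 a, A (g t) (g (t+1)) = ∑ t ∈ Finset.Ico 0 a, A (f t) (f (t+1)) :=
    Finset.sum_congr rfl fun t ht => hinit t (by simpa using (Finset.mem_Ico.mp ht).2)
  have eq2 : ∑ t ∈ Finset.Ico a (m-d), A (g t) (g (t+1)) = ∑ t ∈ Finset.Ico b m, A (f t) (f (t+1)) := by
    rw [Finset.sum_Ico_eq_sum_range, Finset.sum_Ico_eq_sum_range]
    have hlen : m - d - a = m - b := by omega
    rw [hlen]
    refine Finset.sum_congr rfl fun t _ => ?_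
    rw [hmid (a + t) (by omega)]
    have e : a + t + d = b + t := by omega
    rw [e]
  rw [split_f, split_g, eq1, eq2]
  rw [add_comm (∑ t ∈ Finset.Ico 0 a, A (f t) (f (t+1))) _, add_assoc]

private lemma mpPow_le_mpStar {n : ℕ} {U : Fin n → Fin n → EReal} (hrho : rho U ≤ 0) :
    ∀ (m : ℕ) (i j : Fin n), mpPow U m i j ≤ mpStar U i j := by
  intro m
  induction m using Nat.strong_induction_on with
  | _ m ih =>
  intro i j
  by_cases hm : m < n
  · exact le_iSup (fun k : Fin n => mpPow U (k:ℕ) i j) ⟨m, hm⟩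
  push_neg at hm
  refine (mpPow_le_pathSup U m i j).trans (iSup_le fun f => iSup_le fun hf => ?_)
  obtain ⟨hf0, hfm⟩ := hf
  obtain ⟨t1, t2, hne, heq⟩ :=
    Fintype.exists_ne_map_eq_of_card_lt (fun t : Fin (n+1) => f (t : ℕ)) (by simp)
  obtain ⟨a, b, hab, hbn, hfab⟩ : ∃ a b : ℕ, a < b ∧ b ≤ n ∧ f a = f b := by
    rcases hne.lt_or_gt with h | h
    · exact ⟨t1, t2, h, by omega, heq⟩
    · exact ⟨t2, t1, h, by omega, heq.symm⟩
  have hbm : b ≤ m := hbn.trans hm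
  set d := b - a with hd
  set g : ℕ → Fin n := fun t => if t < a then f t else f (t + d) with hg
  rw [cut_sum U f a b m hab hbm hfab]
  have hcyc : (∑ t ∈ Finset.Ico a b, U (f t) (f (t+1))) ≤ 0 := by
    have hc := cycle_sum_nonpos hrho d (by omega) (fun t => f (a+t))
      (by show f (a + d) = f (a + 0)
          rw [show a + d = b from by omega, Nat.add_zero]
          exact hfab.symm)
    rw [Finset.sum_Ico_eq_sum_range]
    simpa [add_assoc, hd] using hc
  have hg0 : g 0 = i := by
    rw [hg]
    by_cases h0a : 0 < a
    · rw [← hf0]; exact if_pos h0a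
    · have ha0 : a = 0 := by omega
      simp only [if_neg (by omega : ¬ (0:ℕ) < a)]
      rw [Nat.zero_add, show d = b from by omega, ← hfab, ha0, hf0]
  have hgm : g (m - d) = j := by
    rw [hg]
    simp only [if_neg (by omega : ¬ m - d < a)]
    rw [show m - d + d = m from by omega, hfm]
  have hrest : (∑ t ∈ Finset.range (m - d), U (g t) (g (t+1))) ≤ mpPow U (m-d) i j := by
    have := pathSum_le_mpPow U (m-d) g
    rwa [hg0, hgm] at this
  refine le_trans (add_le_add_left hcyc _) ?_
  rw [zero_add]
  exact hrest.trans (ih (m - d) (by omega) i j)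

private lemma mul_mpPow_le {n : ℕ} {U : Fin n → Fin n → EReal} :
    ∀ (m : ℕ) (i k j : Fin n), U i k + mpPow U m k j ≤ mpPow U (m+1) i j
  | 0, i, k, j => by
    show U i k + mpId n k j ≤ ⨆ l, mpId n i l + U l j
    refine le_trans ?_ (le_iSup (fun l => mpId n i l + U l j) i)
    by_cases hkj : k = j
    · subst hkj
      simp [mpId]
    · simp [mpId, hkj]
  | m+1, i, k, j => by
    haveI : Nonempty (Fin n) := ⟨i⟩
    rw [mpPow_succ_def, mpPow_succ_def, er_add_isup]
    refine iSup_le fun l => ?_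
    refine le_trans ?_ (le_iSup (fun l => mpPow U (m+1) i l + U l j) l)
    rw [← add_assoc]
    exact add_le_add_left (mul_mpPow_le m i k l) _

private lemma mul_mpStar_le {n : ℕ} {U : Fin n → Fin n → EReal} (hrho : rho U ≤ 0)
    (i k j : Fin n) : U i k + mpStar U k j ≤ mpStar U i j := by
  haveI : Nonempty (Fin n) := ⟨i⟩
  show U i k + ⨆ l : Fin n, mpPow U (l:ℕ) k j ≤ _
  rw [er_add_isup]
  exact iSup_le fun l => (mul_mpPow_le (l:ℕ) i k j).trans (mpPow_le_mpStar hrho _ i j)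

private lemma invariant_mpStar {n : ℕ} {U : Fin n → Fin n → EReal} {x : Fin n → EReal}
    (hx : ∀ i, (⨆ j, U i j + x j) ≤ x i) :
    ∀ i j, mpStar U i j + x j ≤ x i := by
  have key : ∀ (m : ℕ) (i j : Fin n), mpPow U m i j + x j ≤ x i := by
    intro m
    induction m with
    | zero =>
      intro i j
      show mpId n i j + x j ≤ x i
      by_cases hij : i = j
      · subst hij; simp [mpId]
      · simp [mpId, hij]
    | succ m ihm =>
      intro i j
      haveI : Nonempty (Fin n) := ⟨i⟩
      rw [mpPow_succ_def, er_isup_add]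
      refine iSup_le fun k => ?_
      rw [add_assoc]
      refine le_trans (add_le_add_right ?_ _) (ihm i k)
      exact le_trans (le_iSup (fun j => U k j + x j) j) (hx k)
  intro i j
  haveI : Nonempty (Fin n) := ⟨i⟩
  show (⨆ l : Fin n, mpPow U (l:ℕ) i j) + x j ≤ x i
  rw [er_isup_add]
  exact iSup_le fun l => key (l:ℕ) i j

private lemma er_half_add (F : EReal) : ((((2:ℝ)⁻¹ : ℝ)) : EReal) * (F + F) = F := by
  induction F with
  | bot => rw [EReal.bot_add]; exact EReal.coe_mul_bot_of_pos (by norm_num)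
  | coe x => rw [← EReal.coe_add, ← EReal.coe_mul]; congr 1; ring
  | top => rw [EReal.top_add_top]; exact EReal.coe_mul_top_of_pos (by norm_num)


/-- Description of the minimizer set of the pseudolinear problem over an alcoved
polyhedron: if `θ` (the optimal value expression) is a real number, then
`{x ∈ ℝ^n : g ≤ x ≤ h, U ⊗ x ≤ x, f(x) = θ}`
` = { U* ⊗ v : v ∈ ℝ^n, max(g j, p j − θ) ≤ v j ≤ min_i(−(U*)_{ij} + min(θ + q i, h i)) }`,
with the conventions `−(−∞) = +∞`, `θ + (+∞) = +∞`, and empty minima `+∞`. -/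
theorem stmt10 (n : ℕ) (U : Fin n → Fin n → EReal) (g h p q : Fin n → EReal)
    (hU : ∀ i j, U i j ≠ ⊤) (hg : ∀ i, g i ≠ ⊤) (hh : ∀ i, h i ≠ ⊥)
    (hp : ∀ i, p i ≠ ⊤) (hq : ∀ i, q i ≠ ⊥)
    (hrho : rho U ≤ 0) (hgh : ∀ i, (⨆ j, mpStar U i j + g j) ≤ h i)
    (θ : EReal)
    (hθ : θ =
      ((((2 : ℝ)⁻¹ : ℝ) : EReal) *
        ⨆ (i) (j) (_ : q i ≠ ⊤) (_ : mpStar U i j ≠ ⊥) (_ : p j ≠ ⊥),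
          (-(q i) + mpStar U i j + p j)) ⊔
      (⨆ (i) (j) (_ : h i ≠ ⊤) (_ : mpStar U i j ≠ ⊥) (_ : p j ≠ ⊥),
          (-(h i) + mpStar U i j + p j)) ⊔
      (⨆ (i) (j) (_ : q i ≠ ⊤) (_ : mpStar U i j ≠ ⊥) (_ : g j ≠ ⊥),
          (-(q i) + mpStar U i j + g j)))
    (hθreal : ∃ t : ℝ, θ = (t : EReal)) :
    {x : Fin n → ℝ |
        (∀ i, g i ≤ (x i : EReal) ∧ (x i : EReal) ≤ h i ∧
          (⨆ j, U i j + (x j : EReal)) ≤ (x i : EReal)) ∧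
        ((⨆ (i) (_ : p i ≠ ⊥), (p i - (x i : EReal))) ⊔
         (⨆ (i) (_ : q i ≠ ⊤), ((x i : EReal) - q i))) = θ} =
    {x : Fin n → ℝ | ∃ v : Fin n → ℝ,
        (∀ j, (g j ⊔ (p j - θ)) ≤ (v j : EReal) ∧
          (v j : EReal) ≤ ⨅ i, (-(mpStar U i j) + ((θ + q i) ⊓ h i))) ∧
        (∀ i, (⨆ j, mpStar U i j + (v j : EReal)) = (x i : EReal))} := by
  obtain ⟨t, ht⟩ := hθreal
  subst ht
  rcases Nat.eq_zero_or_pos n with hn0 | hn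
  · exfalso
    subst hn0
    simp only [iSup_of_empty] at hθ
    rw [EReal.coe_mul_bot_of_pos (by norm_num)] at hθ
    simp at hθ
  haveI : Nonempty (Fin n) := ⟨⟨0, hn⟩⟩
  have hsne_top : ∀ i j, mpStar U i j ≠ ⊤ := mpStar_ne_top hU
  ext x
  simp only [Set.mem_setOf_eq]
  constructor
  · rintro ⟨hfeas, hval⟩
    have hxg : ∀ i, g i ≤ (x i : EReal) := fun i => (hfeas i).1
    have hxh : ∀ i, (x i : EReal) ≤ h i := fun i => (hfeas i).2.1
    have hsx : ∀ i j, mpStar U i j + (x j : EReal) ≤ (x i : EReal) :=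
      invariant_mpStar (x := fun i => ((x i : ℝ) : EReal)) (fun i => (hfeas i).2.2)
    have hpx : ∀ i, p i ≠ ⊥ → p i - (x i : EReal) ≤ (t : EReal) := fun i hi =>
      le_trans (le_iSup_of_le i (le_iSup (fun _ : p i ≠ ⊥ => p i - ((x i : ℝ) : EReal)) hi)) (le_sup_left.trans_eq hval)
    have hqx : ∀ i, q i ≠ ⊤ → (x i : EReal) - q i ≤ (t : EReal) := fun i hi =>
      le_trans (le_iSup_of_le i (le_iSup (fun _ : q i ≠ ⊤ => ((x i : ℝ) : EReal) - q i) hi)) (le_sup_right.trans_eq hval)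
    refine ⟨x, fun j => ⟨sup_le (hxg j) ?_, ?_⟩, fun i => ?_⟩
    · -- p j - t ≤ x j
      rcases eq_or_ne (p j) ⊥ with hpj | hpj
      · rw [hpj, EReal.bot_sub]; exact bot_le
      · lift p j to ℝ using ⟨hp j, hpj⟩ with pr hpr
        have h0 := hpx j (hpr ▸ hpj)
        rw [← hpr] at h0
        have h1 : pr - x j ≤ t := by exact_mod_cast h0
        have h2 : pr - t ≤ x j := by linarith
        exact_mod_cast h2
    · -- x j ≤ ⨅ i, ...
      refine le_iInf fun i => ?_
      rcases eq_or_ne (mpStar U i j) ⊥ with hsij | hsij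
      · rw [hsij]
        have hqb : ((t : EReal) + q i) ⊓ h i ≠ ⊥ := by
          refine ne_of_gt (lt_min ?_ ?_)
          · rcases eq_or_ne (q i) ⊤ with hqt | hqt
            · rw [hqt, EReal.add_top_of_ne_bot (EReal.coe_ne_bot t)]; exact bot_lt_top
            · lift q i to ℝ using ⟨hqt, hq i⟩ with qr
              rw [← EReal.coe_add]; exact EReal.bot_lt_coe _
          · exact bot_lt_iff_ne_bot.mpr (hh i)
        rw [show -(⊥ : EReal) = ⊤ from rfl, EReal.top_add_of_ne_bot hqb]
        exact le_top
      · lift mpStar U i j to ℝ using ⟨hsne_top i j, hsij⟩ with sr hsr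
        rw [er_le_neg_add]
        refine le_min ?_ ?_
        · rcases eq_or_ne (q i) ⊤ with hqt | hqt
          · rw [hqt, EReal.add_top_of_ne_bot (EReal.coe_ne_bot t)]; exact le_top
          · lift q i to ℝ using ⟨hqt, hq i⟩ with qr hqr
            have h0 := hsx i j
            rw [← hsr] at h0
            have h1 : sr + x j ≤ x i := by exact_mod_cast h0
            have h0' := hqx i (hqr ▸ hqt)
            rw [← hqr] at h0'
            have h2 : x i - qr ≤ t := by exact_mod_cast h0'
            have h3 : sr + x j ≤ t + qr := by linarith
            exact_mod_cast h3
        · refine le_trans ?_ (hxh i)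
          have h0 := hsx i j
          rw [← hsr] at h0
          exact h0
    · -- sup = x i
      refine le_antisymm (iSup_le fun j => hsx i j) ?_
      refine le_trans ?_ (le_iSup (fun j => mpStar U i j + (x j : EReal)) i)
      calc (x i : EReal) = 0 + (x i : EReal) := (zero_add _).symm
        _ ≤ mpStar U i i + (x i : EReal) := add_le_add_left (mpStar_diag U i) _
  · rintro ⟨v, hv, hxv⟩
    have hgv : ∀ j, g j ≤ (v j : EReal) := fun j => le_sup_left.trans (hv j).1
    have hpv : ∀ j, p j - (t : EReal) ≤ (v j : EReal) := fun j => le_sup_right.trans (hv j).1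
    have hub : ∀ i j, (v j : EReal) ≤ -(mpStar U i j) + (((t : EReal) + q i) ⊓ h i) :=
      fun i j => (hv j).2.trans (iInf_le _ i)
    have hvx : ∀ i, (v i : EReal) ≤ (x i : EReal) := by
      intro i
      rw [← hxv i]
      refine le_trans ?_ (le_iSup (fun j => mpStar U i j + (v j : EReal)) i)
      calc (v i : EReal) = 0 + (v i : EReal) := (zero_add _).symm
        _ ≤ _ := add_le_add_left (mpStar_diag U i) _
    have hsv : ∀ i j, mpStar U i j + (v j : EReal) ≤ (x i : EReal) := fun i j =>
      (le_iSup (fun j => mpStar U i j + (v j : EReal)) j).trans_eq (hxv i)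
    have hgx : ∀ i, g i ≤ (x i : EReal) := fun i => (hgv i).trans (hvx i)
    have hxh : ∀ i, (x i : EReal) ≤ h i := by
      intro i
      rw [← hxv i]
      refine iSup_le fun j => ?_
      rcases eq_or_ne (mpStar U i j) ⊥ with hsij | hsij
      · rw [hsij, EReal.bot_add]; exact bot_le
      · lift mpStar U i j to ℝ using ⟨hsne_top i j, hsij⟩ with sr hsr
        have h0 := hub i j
        rw [← hsr] at h0
        have := h0.trans (add_le_add_right (min_le_right _ _) _)
        exact (er_le_neg_add sr _ _).mp this
    have hxq : ∀ i, (x i : EReal) ≤ (t : EReal) + q i := by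
      intro i
      rw [← hxv i]
      refine iSup_le fun j => ?_
      rcases eq_or_ne (mpStar U i j) ⊥ with hsij | hsij
      · rw [hsij, EReal.bot_add]; exact bot_le
      · lift mpStar U i j to ℝ using ⟨hsne_top i j, hsij⟩ with sr hsr
        have h0 := hub i j
        rw [← hsr] at h0
        have := h0.trans (add_le_add_right (min_le_left _ _) _)
        exact (er_le_neg_add sr _ _).mp this
    have hUx : ∀ i, (⨆ j, U i j + (x j : EReal)) ≤ (x i : EReal) := by
      intro i
      refine iSup_le fun j => ?_
      rw [← hxv j, er_add_isup]
      refine iSup_le fun k => ?_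
      rw [← add_assoc]
      exact (add_le_add_left (mul_mpStar_le hrho i j k) _).trans (hsv i k)
    have hsx : ∀ i j, mpStar U i j + (x j : EReal) ≤ (x i : EReal) :=
      invariant_mpStar (x := fun i => ((x i : ℝ) : EReal)) hUx
    refine ⟨fun i => ⟨hgx i, hxh i, hUx i⟩, ?_⟩
    refine le_antisymm (sup_le ?_ ?_) ?_
    · -- S1 ≤ t
      refine iSup_le fun i => iSup_le fun hpi => ?_
      lift p i to ℝ using ⟨hp i, hpi⟩ with pr hpr
      have h0 := hpv i
      rw [← hpr] at h0
      have h1 : pr - t ≤ v i := by exact_mod_cast h0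
      have h2 : v i ≤ x i := by exact_mod_cast hvx i
      have h3 : pr - x i ≤ t := by linarith
      exact_mod_cast h3
    · -- S2 ≤ t
      refine iSup_le fun i => iSup_le fun hqi => ?_
      lift q i to ℝ using ⟨hqi, hq i⟩ with qr hqr
      have h0 := hxq i
      rw [← hqr] at h0
      have h1 : (x i : ℝ) ≤ t + qr := by exact_mod_cast h0
      have h3 : x i - qr ≤ t := by linarith
      exact_mod_cast h3
    · -- t ≤ F
      rw [hθ]
      refine sup_le (sup_le ?_ ?_) ?_
      · -- half term
        refine le_trans (mul_le_mul_of_nonneg_left ?_ (by norm_num : (0:EReal) ≤ (((2:ℝ)⁻¹ : ℝ) : EReal))) (le_of_eq (er_half_add _))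
        refine iSup_le fun i => iSup_le fun j => iSup_le fun hqi => iSup_le fun hsij => iSup_le fun hpj => ?_
        lift q i to ℝ using ⟨hqi, hq i⟩ with qr hqr
        lift mpStar U i j to ℝ using ⟨hsne_top i j, hsij⟩ with sr hsr
        lift p j to ℝ using ⟨hp j, hpj⟩ with pr hpr
        have h0 := hsx i j
        rw [← hsr] at h0
        have h1 : sr + x j ≤ x i := by exact_mod_cast h0
        have e1 : -(qr : EReal) + (sr : EReal) + (pr : EReal) = ((-qr + sr + pr : ℝ) : EReal) := by
          push_cast; ring
        rw [e1]
        have b1 : ((x i - qr : ℝ) : EReal) ≤ (⨆ (i) (_ : q i ≠ ⊤), ((x i : EReal) - q i)) := by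
          refine le_trans (le_of_eq ?_) (le_iSup_of_le i (le_iSup (fun _ : q i ≠ ⊤ => ((x i : ℝ) : EReal) - q i) (hqr ▸ hqi)))
          rw [← hqr, EReal.coe_sub]
        have b2 : ((pr - x j : ℝ) : EReal) ≤ (⨆ (i) (_ : p i ≠ ⊥), (p i - (x i : EReal))) := by
          refine le_trans (le_of_eq ?_) (le_iSup_of_le j (le_iSup (fun _ : p j ≠ ⊥ => p j - ((x j : ℝ) : EReal)) (hpr ▸ hpj)))
          rw [← hpr, EReal.coe_sub]
        calc ((-qr + sr + pr : ℝ) : EReal) ≤ ((x i - qr : ℝ) : EReal) + ((pr - x j : ℝ) : EReal) := by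
              rw [← EReal.coe_add]; exact_mod_cast (by linarith : -qr + sr + pr ≤ (x i - qr) + (pr - x j))
          _ ≤ _ := add_le_add (b1.trans le_sup_right) (b2.trans le_sup_left)
      · -- h term
        refine iSup_le fun i => iSup_le fun j => iSup_le fun hhi => iSup_le fun hsij => iSup_le fun hpj => ?_
        lift h i to ℝ using ⟨hhi, hh i⟩ with hr hhr
        lift mpStar U i j to ℝ using ⟨hsne_top i j, hsij⟩ with sr hsr
        lift p j to ℝ using ⟨hp j, hpj⟩ with pr hpr
        have h0 := hsx i j
        rw [← hsr] at h0
        have h1 : sr + x j ≤ x i := by exact_mod_cast h0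
        have h0' := hxh i
        rw [← hhr] at h0'
        have h2 : (x i : ℝ) ≤ hr := by exact_mod_cast h0'
        refine le_trans ?_ ((le_iSup_of_le j (le_iSup (fun _ : p j ≠ ⊥ => p j - ((x j : ℝ) : EReal)) (hpr ▸ hpj))).trans le_sup_left)
        have e1 : -(hr : EReal) + (sr : EReal) + (pr : EReal) = ((-hr + sr + pr : ℝ) : EReal) := by
          push_cast; ring
        rw [e1, ← hpr, ← EReal.coe_sub]
        exact_mod_cast (by linarith : -hr + sr + pr ≤ pr - x j)
      · -- g term
        refine iSup_le fun i => iSup_le fun j => iSup_le fun hqi => iSup_le fun hsij => iSup_le fun hgj => ?_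
        lift q i to ℝ using ⟨hqi, hq i⟩ with qr hqr
        lift mpStar U i j to ℝ using ⟨hsne_top i j, hsij⟩ with sr hsr
        lift g j to ℝ using ⟨hg j, hgj⟩ with gr hgr
        have h0 := hsx i j
        rw [← hsr] at h0
        have h1 : sr + x j ≤ x i := by exact_mod_cast h0
        have h0' := hgx j
        rw [← hgr] at h0'
        have h2 : gr ≤ x j := by exact_mod_cast h0'
        refine le_trans ?_ ((le_iSup_of_le i (le_iSup (fun _ : q i ≠ ⊤ => ((x i : ℝ) : EReal) - q i) (hqr ▸ hqi))).trans le_sup_right)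
        have e1 : -(qr : EReal) + (sr : EReal) + (gr : EReal) = ((-qr + sr + gr : ℝ) : EReal) := by
          push_cast; ring
        rw [e1, ← hqr, ← EReal.coe_sub]
        exact_mod_cast (by linarith : -qr + sr + gr ≤ x i - qr)
end

section
/- Let U, V ∈ ℝ_max^{m×n}, b, d ∈ ℝ_max^m, p ∈ ℝ_max^n and q ∈ (ℝ ∪ {+∞})^n, and suppose every finite entry of U, V, b, d, p, q is an integer. Define Λ = { λ ∈ ℝ : ∃ x ∈ ℝ^n such that p_i ≤ λ + x_i for all i, x_i ≤ λ + q_i for all i with q_i ∈ ℝ, and max( max_j (u_{ij} + x_j), b_i ) ≤ max( max_j (v_{ij} + x_j), d_i ) for all i }. If Λ is nonempty and bounded below, then λ* := inf Λ satisfies 2λ* ∈ ℤ, i.e., the optimal value of the tropical pseudolinear optimization problem with integer data is an integer multiple of 1/2. -/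
namespace TropHalf

variable {V : Type*} [DecidableEq V]

structure Edge (V : Type*) where
  a : V
  b : V
  k : ℕ
  e : ℤ

/-- `y c.a ≤ y c.b + k·λ + e`. -/
def esat (lam : ℝ) (y : V → ℝ) (c : Edge V) : Prop :=
  y c.a ≤ y c.b + (c.k : ℝ) * lam + (c.e : ℝ)

/-- `0 ≤ k·λ + e`. -/
def asat (lam : ℝ) (a : ℕ × ℤ) : Prop := 0 ≤ (a.1 : ℝ) * lam + (a.2 : ℝ)

def elimE (v : V) (E : List (Edge V)) : List (Edge V) :=
  E.filter (fun c => decide (c.a ≠ v ∧ c.b ≠ v)) ++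
  (E.filter (fun c => decide (c.b = v ∧ c.a ≠ v))).flatMap (fun c1 =>
    (E.filter (fun c => decide (c.a = v ∧ c.b ≠ v))).map
      (fun c2 => ⟨c1.a, c2.b, c1.k + c2.k, c1.e + c2.e⟩))

def elimA (v : V) (E : List (Edge V)) : List (ℕ × ℤ) :=
  (E.filter (fun c => decide (c.a = v ∧ c.b = v))).map (fun c => (c.k, c.e))

lemma build (v : V) (E : List (Edge V)) (lam : ℝ) (y : V → ℝ) (mv : ℝ)
    (hrest : ∀ c ∈ E, c.a ≠ v → c.b ≠ v → esat lam y c)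
    (hloop : ∀ c ∈ E, c.a = v → c.b = v → 0 ≤ (c.k : ℝ) * lam + (c.e : ℝ))
    (hout : ∀ c ∈ E, c.a = v → c.b ≠ v → mv ≤ y c.b + (c.k : ℝ) * lam + (c.e : ℝ))
    (hin : ∀ c ∈ E, c.b = v → c.a ≠ v → y c.a - (c.k : ℝ) * lam - (c.e : ℝ) ≤ mv) :
    ∀ c ∈ E, esat lam (Function.update y v mv) c := by
  intro c hc
  unfold esat
  by_cases ha : c.a = v <;> by_cases hb : c.b = v
  · rw [ha, hb, Function.update_self]
    have := hloop c hc ha hb; linarith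
  · rw [ha, Function.update_self, Function.update_of_ne hb]
    exact hout c hc ha hb
  · rw [hb, Function.update_self, Function.update_of_ne ha]
    have := hin c hc hb ha; linarith
  · rw [Function.update_of_ne ha, Function.update_of_ne hb]
    exact hrest c hc ha hb

lemma elim_step (v : V) (E : List (Edge V)) (lam : ℝ) :
    ((∀ a ∈ elimA v E, asat lam a) ∧ ∃ y, ∀ c ∈ elimE v E, esat lam y c)
    ↔ ∃ y, ∀ c ∈ E, esat lam y c := by
  constructor
  · rintro ⟨habs, y, hy⟩
    -- pair inequalities
    have hpair : ∀ c1 ∈ E, c1.b = v → c1.a ≠ v → ∀ c2 ∈ E, c2.a = v → c2.b ≠ v →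
        y c1.a - (c1.k : ℝ) * lam - (c1.e : ℝ) ≤ y c2.b + (c2.k : ℝ) * lam + (c2.e : ℝ) := by
      intro c1 h1 hb1 ha1 c2 h2 ha2 hb2
      have hmem : (⟨c1.a, c2.b, c1.k + c2.k, c1.e + c2.e⟩ : Edge V) ∈ elimE v E := by
        apply List.mem_append_right
        apply List.mem_flatMap.mpr
        refine ⟨c1, List.mem_filter.mpr ⟨h1, by simp [hb1, ha1]⟩, ?_⟩
        exact List.mem_map.mpr ⟨c2, List.mem_filter.mpr ⟨h2, by simp [ha2, hb2]⟩, rfl⟩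
      have := hy _ hmem
      unfold esat at this
      simp only at this
      push_cast at this
      linarith
    have hloop : ∀ c ∈ E, c.a = v → c.b = v → 0 ≤ (c.k : ℝ) * lam + (c.e : ℝ) := by
      intro c hc ha hb
      exact habs (c.k, c.e) (List.mem_map.mpr ⟨c, List.mem_filter.mpr ⟨hc, by simp [ha, hb]⟩, rfl⟩)
    have hrest : ∀ c ∈ E, c.a ≠ v → c.b ≠ v → esat lam y c := by
      intro c hc ha hb
      exact hy c (List.mem_append_left _ (List.mem_filter.mpr ⟨hc, by simp [ha, hb]⟩))
    -- choose value for v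
    set outs := E.filter (fun c => decide (c.a = v ∧ c.b ≠ v)) with houts
    set ins := E.filter (fun c => decide (c.b = v ∧ c.a ≠ v)) with hins
    have houtmem : ∀ c ∈ E, c.a = v → c.b ≠ v → c ∈ outs := by
      intro c hc ha hb; exact List.mem_filter.mpr ⟨hc, by simp [ha, hb]⟩
    have hinmem : ∀ c ∈ E, c.b = v → c.a ≠ v → c ∈ ins := by
      intro c hc hb ha; exact List.mem_filter.mpr ⟨hc, by simp [ha, hb]⟩
    have houtE : ∀ c ∈ outs, c ∈ E ∧ c.a = v ∧ c.b ≠ v := by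
      intro c hc; have := List.mem_filter.mp hc
      refine ⟨this.1, by simpa using this.2⟩
    have hinE : ∀ c ∈ ins, c ∈ E ∧ c.b = v ∧ c.a ≠ v := by
      intro c hc; have := List.mem_filter.mp hc
      obtain ⟨h1, h2⟩ := this
      simp only [decide_eq_true_eq] at h2
      exact ⟨h1, h2⟩
    rcases houts' : outs with _ | ⟨c0, outs'⟩
    · rcases hins' : ins with _ | ⟨c1, ins'⟩
      · -- no ins, no outs
        refine ⟨Function.update y v 0, build v E lam y 0 hrest hloop ?_ ?_⟩
        · intro c hc ha hb
          exact absurd (houts' ▸ houtmem c hc ha hb) List.not_mem_nil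
        · intro c hc hb ha
          exact absurd (hins' ▸ hinmem c hc hb ha) List.not_mem_nil
      · -- ins nonempty, outs empty: take max of lower bounds
        have hne : ((ins.map (fun c => y c.a - (c.k : ℝ) * lam - (c.e : ℝ))).toFinset).Nonempty := by
          rw [hins']
          exact ⟨y c1.a - (c1.k : ℝ) * lam - (c1.e : ℝ), by simp⟩
        set mv := ((ins.map (fun c => y c.a - (c.k : ℝ) * lam - (c.e : ℝ))).toFinset).max' hne with hmv
        refine ⟨Function.update y v mv, build v E lam y mv hrest hloop ?_ ?_⟩
        · intro c hc ha hb
          exact absurd (houts' ▸ houtmem c hc ha hb) List.not_mem_nil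
        · intro c hc hb ha
          apply Finset.le_max'
          rw [List.mem_toFinset]
          exact List.mem_map.mpr ⟨c, hinmem c hc hb ha, rfl⟩
    · -- outs nonempty: take min of upper bounds
      have hne : ((outs.map (fun c => y c.b + (c.k : ℝ) * lam + (c.e : ℝ))).toFinset).Nonempty := by
        rw [houts']
        exact ⟨y c0.b + (c0.k : ℝ) * lam + (c0.e : ℝ), by simp⟩
      set mv := ((outs.map (fun c => y c.b + (c.k : ℝ) * lam + (c.e : ℝ))).toFinset).min' hne with hmv
      have hmv_le : ∀ c ∈ outs, mv ≤ y c.b + (c.k : ℝ) * lam + (c.e : ℝ) := by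
        intro c hc
        apply Finset.min'_le
        rw [List.mem_toFinset]
        exact List.mem_map.mpr ⟨c, hc, rfl⟩
      have hmv_mem : ∃ c ∈ outs, mv = y c.b + (c.k : ℝ) * lam + (c.e : ℝ) := by
        have := Finset.min'_mem _ hne
        rw [List.mem_toFinset, List.mem_map] at this
        obtain ⟨c, hc, hceq⟩ := this
        exact ⟨c, hc, hceq.symm⟩
      refine ⟨Function.update y v mv, build v E lam y mv hrest hloop ?_ ?_⟩
      · intro c hc ha hb
        exact hmv_le c (houtmem c hc ha hb)
      · intro c hc hb ha
        obtain ⟨c2, hc2, hc2eq⟩ := hmv_mem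
        obtain ⟨hc2E, hc2a, hc2b⟩ := houtE c2 hc2
        rw [hc2eq]
        exact hpair c hc hb ha c2 hc2E hc2a hc2b
  · rintro ⟨y, hy⟩
    constructor
    · intro a ha
      rw [elimA] at ha
      obtain ⟨c, hc, hceq⟩ := List.mem_map.mp ha
      obtain ⟨hcE, hcab⟩ := List.mem_filter.mp hc
      simp only [decide_eq_true_eq] at hcab
      have := hy c hcE
      unfold esat at this
      rw [hcab.1, hcab.2] at this
      subst hceq
      unfold asat
      simp only
      linarith
    · refine ⟨y, ?_⟩
      intro c hc
      rw [elimE] at hc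
      rcases List.mem_append.mp hc with h | h
      · exact hy c (List.mem_filter.mp h).1
      · obtain ⟨c1, hc1, hmem⟩ := List.mem_flatMap.mp h
        obtain ⟨c2, hc2, hceq⟩ := List.mem_map.mp hmem
        obtain ⟨hc1E, hc1ab⟩ := List.mem_filter.mp hc1
        obtain ⟨hc2E, hc2ab⟩ := List.mem_filter.mp hc2
        simp only [decide_eq_true_eq] at hc1ab hc2ab
        have h1 := hy c1 hc1E
        have h2 := hy c2 hc2E
        unfold esat at h1 h2 ⊢
        subst hceq
        simp only
        rw [hc1ab.1] at h1
        rw [hc2ab.1] at h2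
        push_cast
        linarith



def elimList : List V → List (Edge V) → List (Edge V) × List (ℕ × ℤ)
  | [], E => (E, [])
  | v :: vs, E =>
    let r := elimList vs (elimE v E)
    (r.1, elimA v E ++ r.2)

lemma elimList_correct (vs : List V) (E : List (Edge V)) (lam : ℝ) :
    ((∀ a ∈ (elimList vs E).2, asat lam a) ∧ ∃ y, ∀ c ∈ (elimList vs E).1, esat lam y c)
    ↔ ∃ y, ∀ c ∈ E, esat lam y c := by
  induction vs generalizing E with
  | nil => simp [elimList]
  | cons v vs ih =>
    rw [← elim_step v E lam, ← ih (elimE v E)]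
    simp only [elimList]
    constructor
    · rintro ⟨habs, hy⟩
      exact ⟨fun a ha => habs a (List.mem_append_left _ ha),
        fun a ha => habs a (List.mem_append_right _ ha), hy⟩
    · rintro ⟨habs1, habs2, hy⟩
      refine ⟨?_, hy⟩
      intro a ha
      rcases List.mem_append.mp ha with h | h
      · exact habs1 a h
      · exact habs2 a h

lemma elimE_avoid (v : V) (E : List (Edge V)) :
    ∀ c ∈ elimE v E, c.a ≠ v ∧ c.b ≠ v := by
  intro c hc
  rw [elimE] at hc
  rcases List.mem_append.mp hc with h | h
  · have := (List.mem_filter.mp h).2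
    simpa using this
  · obtain ⟨c1, hc1, hmem⟩ := List.mem_flatMap.mp h
    obtain ⟨c2, hc2, hceq⟩ := List.mem_map.mp hmem
    have h1 := (List.mem_filter.mp hc1).2
    have h2 := (List.mem_filter.mp hc2).2
    simp only [decide_eq_true_eq] at h1 h2
    subst hceq
    exact ⟨h1.2, h2.2⟩

lemma elimE_endpoints (v w : V) (E : List (Edge V))
    (hE : ∀ c ∈ E, c.a ≠ w ∧ c.b ≠ w) :
    ∀ c ∈ elimE v E, c.a ≠ w ∧ c.b ≠ w := by
  intro c hc
  rw [elimE] at hc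
  rcases List.mem_append.mp hc with h | h
  · exact hE c (List.mem_filter.mp h).1
  · obtain ⟨c1, hc1, hmem⟩ := List.mem_flatMap.mp h
    obtain ⟨c2, hc2, hceq⟩ := List.mem_map.mp hmem
    subst hceq
    exact ⟨(hE c1 (List.mem_filter.mp hc1).1).1, (hE c2 (List.mem_filter.mp hc2).1).2⟩

lemma elimList_avoid (vs : List V) (E : List (Edge V)) :
    ∀ c ∈ (elimList vs E).1, ∀ v ∈ vs, c.a ≠ v ∧ c.b ≠ v := by
  induction vs generalizing E with
  | nil => intro c _ v hv; exact absurd hv List.not_mem_nil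
  | cons w vs ih =>
    intro c hc v hv
    simp only [elimList] at hc
    rcases List.mem_cons.mp hv with h | h
    · have hw : ∀ c' ∈ elimE w E, c'.a ≠ w ∧ c'.b ≠ w := elimE_avoid w E
      have hprop : ∀ (us : List V) (E' : List (Edge V)),
          (∀ c' ∈ E', c'.a ≠ w ∧ c'.b ≠ w) →
          ∀ c' ∈ (elimList us E').1, c'.a ≠ w ∧ c'.b ≠ w := by
        intro us
        induction us with
        | nil => intro E' h c' hc'; exact h c' hc'
        | cons u us ih2 =>
          intro E' h c' hc'
          simp only [elimList] at hc'
          exact ih2 (elimE u E') (elimE_endpoints u w E' h) c' hc'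
      rw [h]
      exact hprop vs (elimE w E) hw c hc
    · exact ih (elimE w E) c hc v h

/-- Invariant: `k` is bounded by the number of endpoints equal to `s`. -/
def kap (s : V) (v : V) : ℕ := if v = s then 1 else 0

def inv (s : V) (E : List (Edge V)) : Prop :=
  ∀ c ∈ E, c.k ≤ kap s c.a + kap s c.b

lemma kap_le_one (s v : V) : kap s v ≤ 1 := by
  unfold kap; split <;> omega

lemma elimA_le_two (s v : V) (E : List (Edge V)) (hE : inv s E) :
    ∀ a ∈ elimA v E, a.1 ≤ 2 := by
  intro a ha
  rw [elimA] at ha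
  obtain ⟨c, hc, hceq⟩ := List.mem_map.mp ha
  subst hceq
  have := hE c (List.mem_filter.mp hc).1
  have h1 := kap_le_one s c.a
  have h2 := kap_le_one s c.b
  simp only
  omega

lemma elimE_inv (s v : V) (hv : v ≠ s) (E : List (Edge V)) (hE : inv s E) :
    inv s (elimE v E) := by
  intro c hc
  rw [elimE] at hc
  rcases List.mem_append.mp hc with h | h
  · exact hE c (List.mem_filter.mp h).1
  · obtain ⟨c1, hc1, hmem⟩ := List.mem_flatMap.mp h
    obtain ⟨c2, hc2, hceq⟩ := List.mem_map.mp hmem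
    obtain ⟨hc1E, hc1ab⟩ := List.mem_filter.mp hc1
    obtain ⟨hc2E, hc2ab⟩ := List.mem_filter.mp hc2
    simp only [decide_eq_true_eq] at hc1ab hc2ab
    have h1 := hE c1 hc1E
    have h2 := hE c2 hc2E
    subst hceq
    simp only
    have hkv : kap s v = 0 := by unfold kap; simp [hv]
    rw [hc1ab.1] at h1
    rw [hc2ab.1] at h2
    rw [hkv] at h1 h2
    omega

lemma elimList_abs_le_two (s : V) (vs : List V) (hvs : s ∉ vs) (E : List (Edge V))
    (hE : inv s E) :
    (∀ a ∈ (elimList vs E).2, a.1 ≤ 2) ∧ inv s (elimList vs E).1 := by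
  induction vs generalizing E with
  | nil => exact ⟨by intro a ha; exact absurd ha List.not_mem_nil, hE⟩
  | cons v vs ih =>
    have hv : v ≠ s := fun h => hvs (h ▸ (List.mem_cons_self : v ∈ v :: vs))
    have hvs' : s ∉ vs := fun h => hvs (List.mem_cons_of_mem v h)
    have hinv' := elimE_inv s v hv E hE
    obtain ⟨h1, h2⟩ := ih hvs' (elimE v E)  hinv'
    constructor
    · intro a ha
      simp only [elimList] at ha
      rcases List.mem_append.mp ha with h | h
      · exact elimA_le_two s v E hE a h
      · exact h1 a h
    · exact h2

lemma elimList_append (vs1 vs2 : List V) (E : List (Edge V)) :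
    elimList (vs1 ++ vs2) E =
      ((elimList vs2 (elimList vs1 E).1).1,
       (elimList vs1 E).2 ++ (elimList vs2 (elimList vs1 E).1).2) := by
  induction vs1 generalizing E with
  | nil => simp [elimList]
  | cons v vs ih =>
    simp only [List.cons_append, elimList]
    rw [ih (elimE v E), List.append_assoc]



section Full
variable [Fintype V]

noncomputable def fullList (s : V) : List V := (Finset.univ.erase s).toList ++ [s]

noncomputable def finalAbs (s : V) (E : List (Edge V)) : List (ℕ × ℤ) :=
  (elimList (fullList s) E).2

lemma mem_fullList (s v : V) : v ∈ fullList s := by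
  by_cases h : v = s
  · exact List.mem_append_right _ (h ▸ List.mem_singleton_self v)
  · exact List.mem_append_left _ (Finset.mem_toList.mpr (Finset.mem_erase.mpr ⟨h, Finset.mem_univ v⟩))

lemma feas_char (s : V) (E : List (Edge V)) (lam : ℝ) :
    (∃ y, ∀ c ∈ E, esat lam y c) ↔ ∀ a ∈ finalAbs s E, asat lam a := by
  rw [← elimList_correct (fullList s) E lam]
  unfold finalAbs
  constructor
  · exact fun h => h.1
  · intro h
    refine ⟨h, fun _ => 0, fun c hc => ?_⟩
    have := elimList_avoid (fullList s) E c hc c.a (mem_fullList s c.a)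
    exact absurd rfl this.1

lemma finalAbs_le_two (s : V) (E : List (Edge V)) (hE : inv s E) :
    ∀ a ∈ finalAbs s E, a.1 ≤ 2 := by
  unfold finalAbs fullList
  rw [elimList_append]
  set vs1 := (Finset.univ.erase s).toList with hvs1
  have hs : s ∉ vs1 := by
    rw [hvs1]
    intro h
    exact absurd (Finset.mem_erase.mp (Finset.mem_toList.mp h)).1 (by simp)
  obtain ⟨h1, h2⟩ := elimList_abs_le_two s vs1 hs E hE
  intro a ha
  simp only at ha
  rcases List.mem_append.mp ha with h | h
  · exact h1 a h
  · -- from elimList [s] : abs = elimA s E' ++ []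
    simp only [elimList] at h
    rcases List.mem_append.mp h with h' | h'
    · exact elimA_le_two s s _ h2 a h'
    · exact absurd h' List.not_mem_nil

end Full



lemma filterMap_if_mem {α β : Type*} (l : List α) (P : α → Prop) [DecidablePred P]
    (f : α → β) (c : β) :
    c ∈ l.filterMap (fun x => if P x then some (f x) else none) ↔
      ∃ x ∈ l, P x ∧ f x = c := by
  rw [List.mem_filterMap]
  constructor
  · rintro ⟨x, hx, hfx⟩
    by_cases h : P x
    · rw [if_pos h] at hfx
      exact ⟨x, hx, h, Option.some_injective _ hfx⟩
    · rw [if_neg h] at hfx; simp at hfx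
  · rintro ⟨x, hx, h, rfl⟩
    exact ⟨x, hx, by rw [if_pos h]⟩

lemma exists_le_of_le_iSup {n : ℕ} (f : Fin n → EReal) (r : ℝ)
    (hr : (r : EReal) ≤ ⨆ j, f j) : ∃ j, (r : EReal) ≤ f j := by
  rw [← Finset.sup_univ_eq_iSup] at hr
  rcases Nat.eq_zero_or_pos n with h | h
  · subst h
    rw [Finset.univ_eq_empty, Finset.sup_empty] at hr
    exact absurd (le_bot_iff.mp hr) (EReal.coe_ne_bot r)
  · haveI : Nonempty (Fin n) := ⟨⟨0, h⟩⟩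
    obtain ⟨j, -, hj⟩ := Finset.exists_mem_eq_sup' (Finset.univ_nonempty (α := Fin n)) f
    rw [← Finset.sup'_eq_sup (Finset.univ_nonempty (α := Fin n))] at hr
    exact ⟨j, by rw [← hj]; exact hr⟩

open scoped Classical in
noncomputable def zI (w : EReal) : ℤ :=
  if h : ∃ z : ℤ, w = ((z : ℝ) : EReal) then h.choose else 0

lemma zI_spec (w : EReal) (h : ∃ z : ℤ, w = ((z : ℝ) : EReal)) :
    w = ((zI w : ℝ) : EReal) := by
  unfold zI
  rw [dif_pos h]
  exact h.choose_spec

section Problem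

open scoped Classical

variable (m n : ℕ) (Um Vm : Fin m → Fin n → EReal) (b d : Fin m → EReal)
  (p q : Fin n → EReal)

abbrev Vtx (n : ℕ) := Option (Fin n)

abbrev Sel (m n : ℕ) := Fin m → Vtx n → Vtx n

def Lc (i : Fin m) (t : Vtx n) : EReal := t.elim (b i) (fun j => Um i j)

def Rc (i : Fin m) (t : Vtx n) : EReal := t.elim (d i) (fun j => Vm i j)

def xv (x : Fin n → ℝ) : Vtx n → ℝ := fun t => t.elim 0 x

noncomputable def EA : List (Edge (Vtx n)) :=
  (Finset.univ : Finset (Fin n)).toList.filterMap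
    (fun i => if p i ≠ ⊥ then some ⟨none, some i, 1, -zI (p i)⟩ else none)

noncomputable def EB : List (Edge (Vtx n)) :=
  (Finset.univ : Finset (Fin n)).toList.filterMap
    (fun i => if q i ≠ ⊤ then some ⟨some i, none, 1, zI (q i)⟩ else none)

noncomputable def EC (σ : Sel m n) : List (Edge (Vtx n)) :=
  (Finset.univ : Finset (Fin m × Vtx n)).toList.filterMap
    (fun it => if Lc m n Um b it.1 it.2 ≠ ⊥ ∧ Rc m n Vm d it.1 (σ it.1 it.2) ≠ ⊥ then
      some ⟨it.2, σ it.1 it.2, 0, zI (Rc m n Vm d it.1 (σ it.1 it.2)) - zI (Lc m n Um b it.1 it.2)⟩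
      else none)

noncomputable def A0 (σ : Sel m n) : List (ℕ × ℤ) :=
  (Finset.univ : Finset (Fin m × Vtx n)).toList.filterMap
    (fun it => if Lc m n Um b it.1 it.2 ≠ ⊥ ∧ Rc m n Vm d it.1 (σ it.1 it.2) = ⊥ then
      some ((0 : ℕ), (-1 : ℤ)) else none)

noncomputable def Esys (σ : Sel m n) : List (Edge (Vtx n)) :=
  EA n p ++ EB n q ++ EC m n Um Vm b d σ

noncomputable def Asys (σ : Sel m n) : List (ℕ × ℤ) :=
  A0 m n Um Vm b d σ ++ finalAbs (none : Vtx n) (Esys m n Um Vm b d p q σ)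

lemma Esys_inv (σ : Sel m n) : inv (none : Vtx n) (Esys m n Um Vm b d p q σ) := by
  intro c hc
  unfold Esys at hc
  rcases List.mem_append.mp hc with hc' | hc'
  · rcases List.mem_append.mp hc' with h | h
    · obtain ⟨i, -, -, rfl⟩ := (filterMap_if_mem _ _ _ _).mp h
      simp [kap]
    · obtain ⟨i, -, -, rfl⟩ := (filterMap_if_mem _ _ _ _).mp h
      simp [kap]
  · obtain ⟨it, -, -, rfl⟩ := (filterMap_if_mem _ _ _ _).mp hc'
    simp [kap]

lemma Asys_le_two (σ : Sel m n) : ∀ a ∈ Asys m n Um Vm b d p q σ, a.1 ≤ 2 := by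
  intro a ha
  unfold Asys at ha
  rcases List.mem_append.mp ha with h | h
  · obtain ⟨it, -, -, rfl⟩ := (filterMap_if_mem _ _ _ _).mp h
    simp
  · exact finalAbs_le_two _ _ (Esys_inv m n Um Vm b d p q σ) a h




variable (hUint : ∀ i j, Um i j ≠ ⊥ → ∃ z : ℤ, Um i j = ((z : ℝ) : EReal))
  (hVint : ∀ i j, Vm i j ≠ ⊥ → ∃ z : ℤ, Vm i j = ((z : ℝ) : EReal))
  (hbint : ∀ i, b i ≠ ⊥ → ∃ z : ℤ, b i = ((z : ℝ) : EReal))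
  (hdint : ∀ i, d i ≠ ⊥ → ∃ z : ℤ, d i = ((z : ℝ) : EReal))
  (hpint : ∀ i, p i ≠ ⊥ → ∃ z : ℤ, p i = ((z : ℝ) : EReal))
  (hqint : ∀ i, q i ≠ ⊤ → ∃ z : ℤ, q i = ((z : ℝ) : EReal))
  (hqb : ∀ i, q i ≠ ⊥)

include hUint hbint in
lemma hLint : ∀ (i : Fin m) (t : Vtx n), Lc m n Um b i t ≠ ⊥ →
    ∃ z : ℤ, Lc m n Um b i t = ((z : ℝ) : EReal) := by
  intro i t h
  cases t with
  | none => exact hbint i h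
  | some j => exact hUint i j h

include hVint hdint in
lemma hRint : ∀ (i : Fin m) (t : Vtx n), Rc m n Vm d i t ≠ ⊥ →
    ∃ z : ℤ, Rc m n Vm d i t = ((z : ℝ) : EReal) := by
  intro i t h
  cases t with
  | none => exact hdint i h
  | some j => exact hVint i j h

include hUint hVint hbint hdint hpint hqint in
lemma forward (lam : ℝ) (x : Fin n → ℝ)
    (h1 : ∀ i, p i ≤ (lam : EReal) + (x i : EReal))
    (h2 : ∀ i, q i ≠ ⊤ → (x i : EReal) ≤ (lam : EReal) + q i)
    (h3 : ∀ i, ((⨆ j, Um i j + (x j : EReal)) ⊔ b i) ≤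
          ((⨆ j, Vm i j + (x j : EReal)) ⊔ d i)) :
    ∃ σ : Sel m n, ∀ a ∈ Asys m n Um Vm b d p q σ, asat lam a := by
  have hsel : ∀ (i : Fin m) (t : Vtx n), Lc m n Um b i t ≠ ⊥ →
      ∃ t', Rc m n Vm d i t' ≠ ⊥ ∧
        (zI (Lc m n Um b i t) : ℝ) + xv n x t ≤ (zI (Rc m n Vm d i t') : ℝ) + xv n x t' := by
    intro i t hL
    have hLz := zI_spec _ (hLint m n Um b hUint hbint i t hL)
    have hterm : Lc m n Um b i t + ((xv n x t : ℝ) : EReal) ≤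
        (⨆ j, Vm i j + (x j : EReal)) ⊔ d i := by
      refine le_trans ?_ (h3 i)
      cases t with
      | none =>
        simp only [Lc, xv, Option.elim]
        rw [show (((0:ℝ)) : EReal) = 0 from rfl, add_zero]
        exact le_sup_right
      | some j => exact le_sup_of_le_left (le_iSup (fun j => Um i j + (x j : EReal)) j)
    rw [hLz, ← EReal.coe_add] at hterm
    set r := (zI (Lc m n Um b i t) : ℝ) + xv n x t with hr
    rcases le_sup_iff.mp hterm with h | h
    · obtain ⟨j', hj'⟩ := exists_le_of_le_iSup _ r h
      have hVb : Vm i j' ≠ ⊥ := by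
        intro hbot
        rw [hbot, EReal.bot_add] at hj'
        exact absurd (le_bot_iff.mp hj') (EReal.coe_ne_bot r)
      refine ⟨some j', hVb, ?_⟩
      have hVz := zI_spec _ (hRint m n Vm d hVint hdint i (some j') hVb)
      rw [show Rc m n Vm d i (some j') = Vm i j' from rfl] at hVz
      rw [hVz, ← EReal.coe_add] at hj'
      exact_mod_cast hj'
    · have hdb : d i ≠ ⊥ := by
        intro hbot
        rw [hbot] at h
        exact absurd (le_bot_iff.mp h) (EReal.coe_ne_bot r)
      refine ⟨none, hdb, ?_⟩
      have hdz := zI_spec _ (hRint m n Vm d hVint hdint i none hdb)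
      rw [show Rc m n Vm d i none = d i from rfl] at hdz
      rw [hdz] at h
      have := EReal.coe_le_coe_iff.mp h
      simp only [xv, Rc, Option.elim]
      linarith
  classical
  refine ⟨fun i t => if h : Lc m n Um b i t ≠ ⊥ then (hsel i t h).choose else none, ?_⟩
  set σ : Sel m n := fun i t => if h : Lc m n Um b i t ≠ ⊥ then (hsel i t h).choose else none
    with hσdef
  have hσ : ∀ (i : Fin m) (t : Vtx n) (h : Lc m n Um b i t ≠ ⊥),
      Rc m n Vm d i (σ i t) ≠ ⊥ ∧
      (zI (Lc m n Um b i t) : ℝ) + xv n x t ≤ (zI (Rc m n Vm d i (σ i t)) : ℝ) + xv n x (σ i t) := by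
    intro i t h
    have : σ i t = (hsel i t h).choose := by rw [hσdef]; exact dif_pos h
    rw [this]
    exact (hsel i t h).choose_spec
  intro a ha
  unfold Asys at ha
  rcases List.mem_append.mp ha with h | h
  · obtain ⟨it, -, ⟨hL, hR⟩, rfl⟩ := (filterMap_if_mem _ _ _ _).mp h
    exact absurd hR (hσ it.1 it.2 hL).1
  · refine (feas_char (none : Vtx n) (Esys m n Um Vm b d p q σ) lam).mp ⟨xv n x, ?_⟩ a h
    intro c hc
    unfold Esys at hc
    rcases List.mem_append.mp hc with hc' | hc'
    · rcases List.mem_append.mp hc' with hA | hB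
      · obtain ⟨i, -, hpi, rfl⟩ := (filterMap_if_mem _ _ _ _).mp hA
        unfold esat
        simp only [xv, Option.elim]
        have hp1 := h1 i
        rw [zI_spec _ (hpint i hpi), show (lam : EReal) + ((x i : ℝ) : EReal) = ((lam + x i : ℝ) : EReal) by push_cast; ring] at hp1
        have := EReal.coe_le_coe_iff.mp hp1
        push_cast
        linarith
      · obtain ⟨i, -, hqi, rfl⟩ := (filterMap_if_mem _ _ _ _).mp hB
        unfold esat
        simp only [xv, Option.elim]
        have hq2 := h2 i hqi
        rw [zI_spec _ (hqint i hqi), show (lam : EReal) + (((zI (q i) : ℝ)) : EReal) = ((lam + (zI (q i) : ℝ) : ℝ) : EReal) by push_cast; ring] at hq2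
        have := EReal.coe_le_coe_iff.mp hq2
        push_cast
        linarith
    · obtain ⟨it, -, ⟨hL, hR⟩, rfl⟩ := (filterMap_if_mem _ _ _ _).mp hc'
      unfold esat
      simp only
      have := (hσ it.1 it.2 hL).2
      push_cast
      linarith

omit hqb in
include hUint hVint hbint hdint hpint hqint in
lemma backward (lam : ℝ) (σ : Sel m n)
    (hAs : ∀ a ∈ Asys m n Um Vm b d p q σ, asat lam a) :
    ∃ x : Fin n → ℝ,
      (∀ i, p i ≤ (lam : EReal) + (x i : EReal)) ∧
      (∀ i, q i ≠ ⊤ → (x i : EReal) ≤ (lam : EReal) + q i) ∧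
      (∀ i, ((⨆ j, Um i j + (x j : EReal)) ⊔ b i) ≤
            ((⨆ j, Vm i j + (x j : EReal)) ⊔ d i)) := by
  classical
  have hfa : ∀ a ∈ finalAbs (none : Vtx n) (Esys m n Um Vm b d p q σ), asat lam a :=
    fun a ha => hAs a (List.mem_append_right _ ha)
  obtain ⟨y, hy⟩ := (feas_char (none : Vtx n) (Esys m n Um Vm b d p q σ) lam).mpr hfa
  have hgood : ∀ (i : Fin m) (t : Vtx n), Lc m n Um b i t ≠ ⊥ → Rc m n Vm d i (σ i t) ≠ ⊥ := by
    intro i t hL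
    by_contra hR
    have hmem : ((0 : ℕ), (-1 : ℤ)) ∈ A0 m n Um Vm b d σ := by
      refine (filterMap_if_mem _ _ _ _).mpr ⟨(i, t), Finset.mem_toList.mpr (Finset.mem_univ _), ⟨hL, hR⟩, rfl⟩
    have := hAs _ (List.mem_append_left _ hmem)
    unfold asat at this
    push_cast at this
    linarith
  set x : Fin n → ℝ := fun j => y (some j) - y none with hx
  have hxv : ∀ t, xv n x t = y t - y none := by
    intro t; cases t <;> simp [xv, hx]
  refine ⟨x, ?_, ?_, ?_⟩
  · intro i
    by_cases hpi : p i = ⊥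
    · rw [hpi]; exact bot_le
    · have hmem : (⟨none, some i, 1, -zI (p i)⟩ : Edge (Vtx n)) ∈ Esys m n Um Vm b d p q σ := by
        refine List.mem_append_left _ (List.mem_append_left _ ?_)
        exact (filterMap_if_mem _ _ _ _).mpr ⟨i, Finset.mem_toList.mpr (Finset.mem_univ _), hpi, rfl⟩
      have he := hy _ hmem
      unfold esat at he
      simp only at he
      push_cast at he
      rw [zI_spec _ (hpint i hpi), show (lam : EReal) + ((x i : ℝ) : EReal) = ((lam + x i : ℝ) : EReal) by push_cast; ring]
      rw [EReal.coe_le_coe_iff, hx]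
      simp only
      linarith
  · intro i hqi
    have hmem : (⟨some i, none, 1, zI (q i)⟩ : Edge (Vtx n)) ∈ Esys m n Um Vm b d p q σ := by
      refine List.mem_append_left _ (List.mem_append_right _ ?_)
      exact (filterMap_if_mem _ _ _ _).mpr ⟨i, Finset.mem_toList.mpr (Finset.mem_univ _), hqi, rfl⟩
    have he := hy _ hmem
    unfold esat at he
    simp only at he
    push_cast at he
    rw [zI_spec _ (hqint i hqi), show (lam : EReal) + (((zI (q i) : ℝ)) : EReal) = ((lam + (zI (q i) : ℝ) : ℝ) : EReal) by push_cast; ring]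
    rw [EReal.coe_le_coe_iff, hx]
    simp only
    linarith
  · intro i
    have hterm : ∀ t, Lc m n Um b i t ≠ ⊥ →
        Lc m n Um b i t + ((xv n x t : ℝ) : EReal) ≤ (⨆ j, Vm i j + (x j : EReal)) ⊔ d i := by
      intro t hL
      have hR := hgood i t hL
      have hmem : (⟨t, σ i t, 0, zI (Rc m n Vm d i (σ i t)) - zI (Lc m n Um b i t)⟩ : Edge (Vtx n))
          ∈ Esys m n Um Vm b d p q σ := by
        refine List.mem_append_right _ ?_
        exact (filterMap_if_mem _ _ _ _).mpr ⟨(i, t), Finset.mem_toList.mpr (Finset.mem_univ _), ⟨hL, hR⟩, rfl⟩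
      have he := hy _ hmem
      unfold esat at he
      simp only at he
      push_cast at he
      have hstep : (zI (Lc m n Um b i t) : ℝ) + xv n x t ≤
          (zI (Rc m n Vm d i (σ i t)) : ℝ) + xv n x (σ i t) := by
        rw [hxv, hxv]; linarith
      have hLz' := zI_spec _ (hLint m n Um b hUint hbint i t hL)
      have hRz' := zI_spec _ (hRint m n Vm d hVint hdint i (σ i t) hR)
      calc Lc m n Um b i t + ((xv n x t : ℝ) : EReal)
          = (((zI (Lc m n Um b i t) : ℝ) + xv n x t : ℝ) : EReal) := by
            conv_lhs => rw [hLz']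
            push_cast; ring
        _ ≤ (((zI (Rc m n Vm d i (σ i t)) : ℝ) + xv n x (σ i t) : ℝ) : EReal) := by
            exact_mod_cast hstep
        _ = Rc m n Vm d i (σ i t) + ((xv n x (σ i t) : ℝ) : EReal) := by
            conv_rhs => rw [hRz']
            push_cast; ring
        _ ≤ (⨆ j, Vm i j + (x j : EReal)) ⊔ d i := by
            cases hσt : σ i t with
            | none =>
              simp only [Rc, xv, Option.elim]
              rw [show (((0:ℝ)) : EReal) = 0 from rfl, add_zero]
              exact le_sup_right
            | some j' => exact le_sup_of_le_left (le_iSup (fun j => Vm i j + (x j : EReal)) j')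
    apply sup_le
    · apply iSup_le
      intro j
      by_cases hU : Um i j = ⊥
      · rw [hU, EReal.bot_add]; exact bot_le
      · exact hterm (some j) hU
    · by_cases hb' : b i = ⊥
      · rw [hb']; exact bot_le
      · have := hterm none hb'
        simp only [Lc, xv, Option.elim] at this
        rw [show (((0:ℝ)) : EReal) = 0 from rfl, add_zero] at this
        exact this

end Problem



section Assemble

noncomputable def Fs (A : List (ℕ × ℤ)) : Finset ℝ :=
  ((A.filter (fun a => decide (0 < a.1))).map (fun a => ((-a.2 : ℝ)) / (a.1 : ℝ))).toFinset

noncomputable def cv (A : List (ℕ × ℤ)) : ℝ :=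
  if h : (Fs A).Nonempty then (Fs A).max' h else 0

def zeroOK (A : List (ℕ × ℤ)) : Prop := ∀ a ∈ A, a.1 = 0 → 0 ≤ a.2

lemma mem_Fs {A : List (ℕ × ℤ)} {r : ℝ} :
    r ∈ Fs A ↔ ∃ a ∈ A, 0 < a.1 ∧ ((-a.2 : ℝ)) / (a.1 : ℝ) = r := by
  unfold Fs
  rw [List.mem_toFinset, List.mem_map]
  constructor
  · rintro ⟨a, ha, rfl⟩
    obtain ⟨h1, h2⟩ := List.mem_filter.mp ha
    exact ⟨a, h1, by simpa using h2, rfl⟩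
  · rintro ⟨a, ha, hpos, rfl⟩
    exact ⟨a, List.mem_filter.mpr ⟨ha, by simpa using hpos⟩, rfl⟩

lemma f2 (A : List (ℕ × ℤ)) (lam : ℝ) (h : ∀ a ∈ A, asat lam a) : zeroOK A := by
  intro a ha h0
  have := h a ha
  unfold asat at this
  rw [h0] at this
  have h2 : (0:ℝ) ≤ (a.2 : ℝ) := by push_cast at this; linarith
  exact_mod_cast h2

lemma f3 (A : List (ℕ × ℤ)) (lam : ℝ) (h0 : zeroOK A) (hemp : ¬(Fs A).Nonempty) :
    ∀ a ∈ A, asat lam a := by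
  intro a ha
  unfold asat
  rcases Nat.eq_zero_or_pos a.1 with h | h
  · have := h0 a ha h
    rw [h]
    push_cast
    linarith [(by exact_mod_cast this : (0:ℝ) ≤ (a.2 : ℝ))]
  · exact absurd ⟨_, mem_Fs.mpr ⟨a, ha, h, rfl⟩⟩ hemp

lemma f1 (A : List (ℕ × ℤ)) (lam : ℝ) (h0 : zeroOK A) (hne : (Fs A).Nonempty) :
    (∀ a ∈ A, asat lam a) ↔ cv A ≤ lam := by
  have hc : cv A = (Fs A).max' hne := dif_pos hne
  constructor
  · intro h
    rw [hc]
    obtain ⟨a, ha, hpos, heq⟩ := mem_Fs.mp ((Fs A).max'_mem hne)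
    rw [← heq]
    have := h a ha
    unfold asat at this
    rw [div_le_iff₀ (by exact_mod_cast hpos : (0:ℝ) < (a.1 : ℝ))]
    nlinarith
  · intro hlam a ha
    unfold asat
    rcases Nat.eq_zero_or_pos a.1 with h | h
    · have := h0 a ha h
      rw [h]
      push_cast
      linarith [(by exact_mod_cast this : (0:ℝ) ≤ (a.2 : ℝ))]
    · have hmem : ((-a.2 : ℝ)) / (a.1 : ℝ) ∈ Fs A := mem_Fs.mpr ⟨a, ha, h, rfl⟩
      have := le_trans (Finset.le_max' _ _ hmem) (hc ▸ hlam)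
      rw [div_le_iff₀ (by exact_mod_cast h : (0:ℝ) < (a.1 : ℝ))] at this
      nlinarith

lemma f4 (A : List (ℕ × ℤ)) (hne : (Fs A).Nonempty) (hle2 : ∀ a ∈ A, a.1 ≤ 2) :
    ∃ z : ℤ, 2 * cv A = (z : ℝ) := by
  have hc : cv A = (Fs A).max' hne := dif_pos hne
  obtain ⟨a, ha, hpos, heq⟩ := mem_Fs.mp ((Fs A).max'_mem hne)
  have h12 : a.1 = 1 ∨ a.1 = 2 := by have := hle2 a ha; omega
  rcases h12 with h | h
  · refine ⟨-2 * a.2, ?_⟩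
    rw [hc, ← heq, h]
    push_cast
    ring
  · refine ⟨-a.2, ?_⟩
    rw [hc, ← heq, h]
    push_cast
    ring

end Assemble

end TropHalf



/-- For tropical pseudolinear optimization with integer data, the optimal value
`inf Λ` is an integer multiple of `1/2`.  Here
`Λ = {λ ∈ ℝ : ∃ x ∈ ℝ^n, x⁻ ⊗ p ⊕ q⁻ ⊗ x ≤ λ and U ⊗ x ⊕ b ≤ V ⊗ x ⊕ d}`,
and "integer data" means every finite entry of `U, V, b, d, p, q` is an integer. -/
theorem stmt11 (m n : ℕ) (U V : Fin m → Fin n → EReal) (b d : Fin m → EReal)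
    (p q : Fin n → EReal)
    (hU : ∀ i j, U i j ≠ ⊤) (hV : ∀ i j, V i j ≠ ⊤)
    (hb : ∀ i, b i ≠ ⊤) (hd : ∀ i, d i ≠ ⊤)
    (hp : ∀ i, p i ≠ ⊤) (hq : ∀ i, q i ≠ ⊥)
    (hUint : ∀ i j, U i j ≠ ⊥ → ∃ z : ℤ, U i j = ((z : ℝ) : EReal))
    (hVint : ∀ i j, V i j ≠ ⊥ → ∃ z : ℤ, V i j = ((z : ℝ) : EReal))
    (hbint : ∀ i, b i ≠ ⊥ → ∃ z : ℤ, b i = ((z : ℝ) : EReal))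
    (hdint : ∀ i, d i ≠ ⊥ → ∃ z : ℤ, d i = ((z : ℝ) : EReal))
    (hpint : ∀ i, p i ≠ ⊥ → ∃ z : ℤ, p i = ((z : ℝ) : EReal))
    (hqint : ∀ i, q i ≠ ⊤ → ∃ z : ℤ, q i = ((z : ℝ) : EReal))
    (Λ : Set ℝ)
    (hΛ : Λ = {lam : ℝ | ∃ x : Fin n → ℝ,
        (∀ i, p i ≤ (lam : EReal) + (x i : EReal)) ∧
        (∀ i, q i ≠ ⊤ → (x i : EReal) ≤ (lam : EReal) + q i) ∧
        (∀ i, ((⨆ j, U i j + (x j : EReal)) ⊔ b i) ≤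
              ((⨆ j, V i j + (x j : EReal)) ⊔ d i))})
    (hne : Λ.Nonempty) (hbdd : BddBelow Λ) :
    ∃ z : ℤ, 2 * sInf Λ = (z : ℝ) := by
  classical
  set A : TropHalf.Sel m n → List (ℕ × ℤ) := TropHalf.Asys m n U V b d p q with hA
  have hmem : ∀ lam : ℝ, lam ∈ Λ ↔
      ∃ σ : TropHalf.Sel m n, ∀ a ∈ A σ, TropHalf.asat lam a := by
    intro lam
    rw [hΛ]
    constructor
    · rintro ⟨x, h1, h2, h3⟩
      exact TropHalf.forward m n U V b d p q hUint hVint hbint hdint hpint hqint lam x h1 h2 h3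
    · rintro ⟨σ, hσ⟩
      exact TropHalf.backward m n U V b d p q hUint hVint hbint hdint hpint hqint lam σ hσ
  have hle2 : ∀ σ, ∀ a ∈ A σ, a.1 ≤ 2 := TropHalf.Asys_le_two m n U V b d p q
  -- every zeroOK system has a positive-coefficient entry, else Λ is unbounded below
  have hnotfree : ∀ σ : TropHalf.Sel m n, TropHalf.zeroOK (A σ) → (TropHalf.Fs (A σ)).Nonempty := by
    intro σ h0
    by_contra hemp
    obtain ⟨lb, hlb⟩ := hbdd
    have hall : ∀ lam : ℝ, lam ∈ Λ := by
      intro lam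
      exact (hmem lam).mpr ⟨σ, TropHalf.f3 (A σ) lam h0 hemp⟩
    have h1 := hlb (hall (lb - 1))
    linarith
  have good : ∀ σ : TropHalf.Sel m n, (∃ lam, ∀ a ∈ A σ, TropHalf.asat lam a) →
      TropHalf.zeroOK (A σ) ∧ (TropHalf.Fs (A σ)).Nonempty := by
    rintro σ ⟨lam, h⟩
    have h0 := TropHalf.f2 (A σ) lam h
    exact ⟨h0, hnotfree σ h0⟩
  set S : Finset (TropHalf.Sel m n) :=
    Finset.univ.filter (fun σ => TropHalf.zeroOK (A σ) ∧ (TropHalf.Fs (A σ)).Nonempty) with hS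
  have hSne : S.Nonempty := by
    obtain ⟨lam0, hlam0⟩ := hne
    obtain ⟨σ0, hσ0⟩ := (hmem lam0).mp hlam0
    exact ⟨σ0, Finset.mem_filter.mpr ⟨Finset.mem_univ _, good σ0 ⟨lam0, hσ0⟩⟩⟩
  have hcsne : (S.image (fun σ => TropHalf.cv (A σ))).Nonempty := hSne.image _
  set cstar : ℝ := (S.image (fun σ => TropHalf.cv (A σ))).min' hcsne with hcstar
  obtain ⟨σs, hσsS, hσseq⟩ := Finset.mem_image.mp (Finset.min'_mem _ hcsne)
  have hσseq' : TropHalf.cv (A σs) = cstar := by rw [hcstar]; exact hσseq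
  have hσsgood := (Finset.mem_filter.mp hσsS).2
  have hcstarΛ : cstar ∈ Λ := by
    refine (hmem cstar).mpr ⟨σs, ?_⟩
    refine (TropHalf.f1 (A σs) cstar hσsgood.1 hσsgood.2).mpr ?_
    rw [hσseq']
  have hlbcstar : ∀ lam ∈ Λ, cstar ≤ lam := by
    intro lam hlam
    obtain ⟨σ, hσ⟩ := (hmem lam).mp hlam
    have hg := good σ ⟨lam, hσ⟩
    have hcle := (TropHalf.f1 (A σ) lam hg.1 hg.2).mp hσ
    refine le_trans ?_ hcle
    refine Finset.min'_le _ _ ?_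
    exact Finset.mem_image.mpr ⟨σ, Finset.mem_filter.mpr ⟨Finset.mem_univ _, hg⟩, rfl⟩
  have hsinf : sInf Λ = cstar := le_antisymm (csInf_le hbdd hcstarΛ) (le_csInf hne hlbcstar)
  rw [hsinf, ← hσseq']
  exact TropHalf.f4 (A σs) hσsgood.2 (hle2 σs)
end
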